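/- arXiv:2102.09587 — 7 statements merged into one kernel-verified Lean document; each statement's English description precedes it below -/
import Mathlib

section
/- Let Δ and Δ_p be real symmetric n×n matrices whose ℓ2 operator norms are at most 1 (equivalently, all eigenvalues lie in [−1,1]), and let θ_0, …, θ_K be real coefficients. Then ‖∑_{k=0}^K θ_k Δ^k − ∑_{k=0}^K θ_k Δ_p^k‖₂ ≤ (∑_{k=1}^K k·|θ_k|) · ‖Δ − Δ_p‖₂, where ‖·‖₂ denotes the ℓ2 operator norm on matrices. (Polynomial spectral graph filters are linearly stable with respect to any graph shift operator with spectrum in [−1,1], with stability constant C = ∑_{k=1}^K k|θ_k|.) -/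
open scoped Matrix.Norms.L2Operator

lemma my_norm_one_le {n : ℕ} : ‖(1 : Matrix (Fin n) (Fin n) ℝ)‖ ≤ 1 := by
  rw [Matrix.cstar_norm_def, map_one]
  exact ContinuousLinearMap.norm_id_le

lemma my_norm_pow_le {n : ℕ} (A : Matrix (Fin n) (Fin n) ℝ) (hA : ‖A‖ ≤ 1) (k : ℕ) :
    ‖A ^ k‖ ≤ 1 := by
  induction k with
  | zero => simpa using my_norm_one_le
  | succ k ih =>
    calc ‖A ^ (k+1)‖ = ‖A ^ k * A‖ := by rw [pow_succ]
    _ ≤ ‖A ^ k‖ * ‖A‖ := norm_mul_le _ _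
    _ ≤ 1 * 1 := by
        exact mul_le_mul ih hA (norm_nonneg _) zero_le_one
    _ = 1 := one_mul 1

lemma my_pow_sub_pow {n : ℕ} (A B : Matrix (Fin n) (Fin n) ℝ)
    (hA : ‖A‖ ≤ 1) (hB : ‖B‖ ≤ 1) (k : ℕ) :
    ‖A ^ k - B ^ k‖ ≤ k * ‖A - B‖ := by
  induction k with
  | zero => simp
  | succ k ih =>
    have key : A ^ (k+1) - B ^ (k+1) = A ^ k * (A - B) + (A ^ k - B ^ k) * B := by
      rw [pow_succ, pow_succ]
      noncomm_ring
    calc ‖A ^ (k+1) - B ^ (k+1)‖ = ‖A ^ k * (A - B) + (A ^ k - B ^ k) * B‖ := by rw [key]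
    _ ≤ ‖A ^ k * (A - B)‖ + ‖(A ^ k - B ^ k) * B‖ := norm_add_le _ _
    _ ≤ ‖A ^ k‖ * ‖A - B‖ + ‖A ^ k - B ^ k‖ * ‖B‖ :=
        add_le_add (norm_mul_le _ _) (norm_mul_le _ _)
    _ ≤ 1 * ‖A - B‖ + (k * ‖A - B‖) * 1 :=
        add_le_add (mul_le_mul_of_nonneg_right (my_norm_pow_le A hA k) (norm_nonneg _))
          (mul_le_mul ih hB (norm_nonneg _) (by positivity))
    _ = (k + 1 : ℕ) * ‖A - B‖ := by push_cast; ring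

/-- **Linear stability of polynomial spectral graph filters.**
If `Δ` and `Δp` are real symmetric `n × n` matrices whose ℓ2 operator norms are
at most `1`, then for any polynomial filter `g(λ) = ∑_{k=0}^K θ_k λ^k` we have
`‖g(Δ) - g(Δp)‖₂ ≤ (∑_{k=1}^K k * |θ_k|) * ‖Δ - Δp‖₂`. -/
theorem polynomial_filter_linearly_stable {n : ℕ}
    (Δ Δp : Matrix (Fin n) (Fin n) ℝ)
    (hΔsymm : Δ.IsSymm) (hΔpsymm : Δp.IsSymm)
    (hΔ : ‖Δ‖ ≤ 1) (hΔp : ‖Δp‖ ≤ 1)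
    (K : ℕ) (θ : ℕ → ℝ) :
    ‖(∑ k ∈ Finset.range (K + 1), θ k • Δ ^ k) -
        ∑ k ∈ Finset.range (K + 1), θ k • Δp ^ k‖ ≤
      (∑ k ∈ Finset.Icc 1 K, (k : ℝ) * |θ k|) * ‖Δ - Δp‖ := by
  rw [← Finset.sum_sub_distrib]
  have h1 : ∀ k ∈ Finset.range (K+1), θ k • Δ ^ k - θ k • Δp ^ k = θ k • (Δ ^ k - Δp ^ k) := by
    intro k _; rw [smul_sub]
  rw [Finset.sum_congr rfl h1]
  calc ‖∑ k ∈ Finset.range (K+1), θ k • (Δ ^ k - Δp ^ k)‖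
      ≤ ∑ k ∈ Finset.range (K+1), ‖θ k • (Δ ^ k - Δp ^ k)‖ := norm_sum_le _ _
    _ ≤ ∑ k ∈ Finset.range (K+1), |θ k| * (k * ‖Δ - Δp‖) := by
        apply Finset.sum_le_sum
        intro k _
        rw [norm_smul, Real.norm_eq_abs]
        exact mul_le_mul_of_nonneg_left (my_pow_sub_pow Δ Δp hΔ hΔp k) (abs_nonneg _)
    _ = (∑ k ∈ Finset.Icc 1 K, (k : ℝ) * |θ k|) * ‖Δ - Δp‖ := by
        have hins : Finset.range (K+1) = insert 0 (Finset.Icc 1 K) := by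
          ext x; simp [Finset.mem_range, Finset.mem_Icc]; omega
        rw [hins, Finset.sum_insert (by simp), Finset.sum_mul]
        simp only [Nat.cast_zero, zero_mul, mul_zero, zero_add]
        exact Finset.sum_congr rfl fun k _ => by ring
end

section
/- Let L and L_p be real symmetric positive semidefinite n×n matrices and let α > 0. Then the matrices I + αL and I + αL_p are invertible and ‖(I + αL)^{-1} − (I + αL_p)^{-1}‖₂ ≤ α · ‖L − L_p‖₂, where ‖·‖₂ is the ℓ2 operator norm. (The low-pass filter g(λ) = (1+αλ)^{-1} is linearly stable with respect to the normalised Laplacian matrix, with stability constant C = α.) -/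
open scoped Matrix.Norms.L2Operator
open Matrix

lemma aux_smul_psd {n : ℕ} {L : Matrix (Fin n) (Fin n) ℝ} (hL : L.PosSemidef)
    {α : ℝ} (hα : 0 ≤ α) : (α • L).PosSemidef := by
  exact hL.smul hα

lemma aux_posdef {n : ℕ} {L : Matrix (Fin n) (Fin n) ℝ} (hL : L.PosSemidef)
    {α : ℝ} (hα : 0 < α) : (1 + α • L).PosDef :=
  Matrix.PosDef.one.add_posSemidef (aux_smul_psd hL hα.le)

lemma aux_norm_le_mulVec {n : ℕ} {L : Matrix (Fin n) (Fin n) ℝ} (hL : L.PosSemidef)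
    {α : ℝ} (hα : 0 < α) (y : EuclideanSpace ℝ (Fin n)) :
    ‖y‖ ≤ ‖(WithLp.equiv 2 (Fin n → ℝ)).symm ((1 + α • L) *ᵥ (WithLp.equiv 2 (Fin n → ℝ)) y)‖ := by
  set M := 1 + α • L with hM
  set z : EuclideanSpace ℝ (Fin n) :=
    (WithLp.equiv 2 (Fin n → ℝ)).symm (M *ᵥ (WithLp.equiv 2 (Fin n → ℝ)) y) with hz
  have hinner : (inner ℝ y z : ℝ) =
      ((WithLp.equiv 2 (Fin n → ℝ)) y) ⬝ᵥ (M *ᵥ (WithLp.equiv 2 (Fin n → ℝ)) y) := by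
    rw [hz]
    simp [PiLp.inner_apply, dotProduct, RCLike.inner_apply, mul_comm]
  have hdot : ((WithLp.equiv 2 (Fin n → ℝ)) y) ⬝ᵥ (M *ᵥ (WithLp.equiv 2 (Fin n → ℝ)) y)
      ≥ ((WithLp.equiv 2 (Fin n → ℝ)) y) ⬝ᵥ ((WithLp.equiv 2 (Fin n → ℝ)) y) := by
    have h0 := (aux_smul_psd hL hα.le).dotProduct_mulVec_nonneg ((WithLp.equiv 2 (Fin n → ℝ)) y)
    rw [hM, Matrix.add_mulVec, Matrix.one_mulVec, dotProduct_add]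
    simp only [star_trivial] at h0
    linarith
  have hself : ((WithLp.equiv 2 (Fin n → ℝ)) y) ⬝ᵥ ((WithLp.equiv 2 (Fin n → ℝ)) y)
      = ‖y‖ ^ 2 := by
    rw [← real_inner_self_eq_norm_sq]
    simp [PiLp.inner_apply, dotProduct, RCLike.inner_apply]
    rw [EuclideanSpace.norm_sq_eq]; simp [sq]
  have hcs : (inner ℝ y z : ℝ) ≤ ‖y‖ * ‖z‖ := real_inner_le_norm y z
  have key : ‖y‖ ^ 2 ≤ ‖y‖ * ‖z‖ := by
    rw [← hself]
    calc _ ≤ _ := hdot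
    _ = (inner ℝ y z : ℝ) := hinner.symm
    _ ≤ _ := hcs
  rcases eq_or_lt_of_le (norm_nonneg y) with h | h
  · rw [← h]; exact norm_nonneg z
  · nlinarith

lemma aux_norm_inv_le_one {n : ℕ} {L : Matrix (Fin n) (Fin n) ℝ} (hL : L.PosSemidef)
    {α : ℝ} (hα : 0 < α) : ‖(1 + α • L)⁻¹‖ ≤ 1 := by
  set M := 1 + α • L with hM
  have hpd := aux_posdef hL hα
  have hinv := hpd.isUnit.invertible
  rw [Matrix.l2_opNorm_def]
  refine ContinuousLinearMap.opNorm_le_bound _ zero_le_one fun x => ?_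
  rw [one_mul]
  set y : EuclideanSpace ℝ (Fin n) := (Matrix.toEuclideanLin M⁻¹) x with hy
  show ‖y‖ ≤ ‖x‖
  have hxy : (WithLp.equiv 2 (Fin n → ℝ)).symm (M *ᵥ (WithLp.equiv 2 (Fin n → ℝ)) y) = x := by
    rw [hy, Matrix.toEuclideanLin_apply]
    simp only [WithLp.equiv_apply, WithLp.equiv_symm_apply, WithLp.ofLp_toLp, Matrix.mulVec_mulVec]
    rw [Matrix.mul_inv_of_invertible, Matrix.one_mulVec]
  calc ‖y‖ ≤ _ := aux_norm_le_mulVec hL hα y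
  _ = ‖x‖ := by rw [hxy]

/-- **Linear stability of the low-pass filter `g(λ) = (1 + αλ)⁻¹`.**
If `L` and `Lp` are real symmetric positive semidefinite `n × n` matrices and `α > 0`,
then `I + αL` and `I + αLp` are invertible and
`‖(I + αL)⁻¹ - (I + αLp)⁻¹‖₂ ≤ α * ‖L - Lp‖₂`. -/
theorem lowpass_filter_linearly_stable {n : ℕ}
    (L Lp : Matrix (Fin n) (Fin n) ℝ)
    (hL : L.PosSemidef) (hLp : Lp.PosSemidef)
    (α : ℝ) (hα : 0 < α) :
    IsUnit (1 + α • L) ∧ IsUnit (1 + α • Lp) ∧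
      ‖(1 + α • L)⁻¹ - (1 + α • Lp)⁻¹‖ ≤ α * ‖L - Lp‖ := by
  have hA := aux_posdef hL hα
  have hB := aux_posdef hLp hα
  refine ⟨hA.isUnit, hB.isUnit, ?_⟩
  set A := 1 + α • L
  set B := 1 + α • Lp
  have hAi := hA.isUnit.invertible
  have hBi := hB.isUnit.invertible
  have hdiff : A⁻¹ - B⁻¹ = A⁻¹ * (B - A) * B⁻¹ := by
    rw [Matrix.mul_sub, Matrix.sub_mul, mul_assoc, Matrix.mul_inv_of_invertible, mul_one,
      Matrix.inv_mul_of_invertible, one_mul]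
  have hBA : B - A = α • (Lp - L) := by
    simp [A, B, smul_sub]
  calc ‖A⁻¹ - B⁻¹‖ = ‖A⁻¹ * (B - A) * B⁻¹‖ := by rw [hdiff]
    _ ≤ ‖A⁻¹ * (B - A)‖ * ‖B⁻¹‖ := Matrix.l2_opNorm_mul _ _
    _ ≤ ‖A⁻¹‖ * ‖B - A‖ * ‖B⁻¹‖ :=
        mul_le_mul_of_nonneg_right (Matrix.l2_opNorm_mul _ _) (norm_nonneg _)
    _ ≤ 1 * ‖B - A‖ * 1 := by
        have h1 : ‖A⁻¹‖ ≤ 1 := aux_norm_inv_le_one hL hα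
        have h2 : ‖B⁻¹‖ ≤ 1 := aux_norm_inv_le_one hLp hα
        gcongr
    _ = α * ‖L - Lp‖ := by
        rw [one_mul, mul_one, hBA, norm_smul, norm_sub_rev]
        simp [abs_of_pos hα]
end

section
/- Let G and G_p be simple graphs on a common finite vertex set, neither having isolated vertices, and let u be a vertex with α_u ∈ [0,1). Then ∑_{v ∈ R_u} |1/√(d_u d_v) − 1/√(d_u' d_v')| ≤ (α_u/(1−α_u)) · ∑_{v ∈ R_u} 1/√(d_u d_v) ≤ (α_u/(1−α_u)) · (d_u − Δ_u⁻)/√(d_u δ_u). -/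
lemma aux_ratio (a x y x' y' : ℝ) (ha0 : 0 ≤ a) (ha1 : a < 1)
    (hx : 0 < x) (hy : 0 < y)
    (hx1 : (1-a)*x ≤ x') (hx2 : x' ≤ (1+a)*x)
    (hy1 : (1-a)*y ≤ y') (hy2 : y' ≤ (1+a)*y) :
    |1/Real.sqrt (x*y) - 1/Real.sqrt (x'*y')| ≤ (a/(1-a)) * (1/Real.sqrt (x*y)) := by
  have hs : 0 < Real.sqrt (x*y) := Real.sqrt_pos.mpr (by positivity)
  have h1a : (0:ℝ) < 1 - a := by linarith
  have hx' : 0 < x' := lt_of_lt_of_le (by positivity) hx1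
  have hy' : 0 < y' := lt_of_lt_of_le (by positivity) hy1
  have ht : 0 < Real.sqrt (x'*y') := Real.sqrt_pos.mpr (by positivity)
  have hlow : (1-a) * Real.sqrt (x*y) ≤ Real.sqrt (x'*y') := by
    have e : Real.sqrt ((1-a)^2 * (x*y)) = (1-a) * Real.sqrt (x*y) := by
      rw [Real.sqrt_mul (sq_nonneg (1-a)) (x*y), Real.sqrt_sq h1a.le]
    rw [← e]
    apply Real.sqrt_le_sqrt
    have h := mul_le_mul hx1 hy1 (by positivity) hx'.le
    nlinarith [h]
  have hhigh : Real.sqrt (x'*y') ≤ (1+a) * Real.sqrt (x*y) := by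
    have e : Real.sqrt ((1+a)^2 * (x*y)) = (1+a) * Real.sqrt (x*y) := by
      rw [Real.sqrt_mul (sq_nonneg (1+a)) (x*y), Real.sqrt_sq (by linarith)]
    rw [← e]
    apply Real.sqrt_le_sqrt
    have h := mul_le_mul hx2 hy2 hy'.le (by positivity)
    nlinarith [h]
  set s := Real.sqrt (x*y) with hsdef
  set t := Real.sqrt (x'*y') with htdef
  have h1 : 1/t ≤ 1/((1-a)*s) :=
    one_div_le_one_div_of_le (by positivity) hlow
  have h2 : 1/((1+a)*s) ≤ 1/t :=
    one_div_le_one_div_of_le ht hhigh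
  have e1 : 1/((1-a)*s) = 1/(1-a) * (1/s) := by field_simp
  have e2 : 1/((1+a)*s) = 1/(1+a) * (1/s) := by field_simp
  rw [abs_le]
  constructor
  · have e3 : -(a/(1-a) * (1/s)) = 1/s - 1/(1-a)*(1/s) := by
      field_simp
      ring
    rw [e3]
    rw [e1] at h1
    linarith
  · rw [e2] at h2
    have c : (1 - 1/(1+a)) ≤ a/(1-a) := by
      have e3 : 1 - 1/(1+a) = a/(1+a) := by
        field_simp
        ring
      rw [e3]
      apply div_le_div_of_nonneg_left ha0 h1a (by linarith)
    have e4 : 1/s - 1/(1+a)*(1/s) = (1 - 1/(1+a)) * (1/s) := by ring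
    have step : 1/s - 1/t ≤ (1 - 1/(1+a)) * (1/s) := by rw [← e4]; linarith
    calc 1/s - 1/t ≤ (1 - 1/(1+a)) * (1/s) := step
      _ ≤ a/(1-a) * (1/s) := mul_le_mul_of_nonneg_right c (by positivity)

/-- `α_u`: the maximum relative change in degree among the vertex `u` and its
neighbours in `G`, i.e. `max_{v ∈ N_G(u) ∪ {u}} |d_v' - d_v| / d_v`. -/
noncomputable def alphaU {V : Type*} [Fintype V] [DecidableEq V]
    (G Gp : SimpleGraph V) [DecidableRel G.Adj] [DecidableRel Gp.Adj] (u : V) : ℝ :=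
  (insert u (G.neighborFinset u)).sup' (Finset.insert_nonempty _ _)
    (fun v => |(Gp.degree v : ℝ) - (G.degree v : ℝ)| / (G.degree v : ℝ))

/-- **Lemma 1** of the paper: for `α_u ∈ [0,1)`,
`∑_{v ∈ R_u} |1/√(d_u d_v) - 1/√(d_u' d_v')| ≤ (α_u/(1-α_u)) ∑_{v ∈ R_u} 1/√(d_u d_v)
  ≤ (α_u/(1-α_u)) (d_u - Δ_u⁻)/√(d_u δ_u)`. -/
theorem remaining_edges_term_bound {V : Type*} [Fintype V] [DecidableEq V]
    (G Gp : SimpleGraph V) [DecidableRel G.Adj] [DecidableRel Gp.Adj]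
    (hG : ∀ v, (G.neighborFinset v).Nonempty)
    (hGp : ∀ v, (Gp.neighborFinset v).Nonempty)
    (u : V) (hα : alphaU G Gp u ∈ Set.Ico (0 : ℝ) 1) :
    (∑ v ∈ Finset.univ.filter (fun v => G.Adj u v ∧ Gp.Adj u v),
        |1 / Real.sqrt ((G.degree u : ℝ) * (G.degree v : ℝ)) -
          1 / Real.sqrt ((Gp.degree u : ℝ) * (Gp.degree v : ℝ))| ≤
      (alphaU G Gp u / (1 - alphaU G Gp u)) *
        ∑ v ∈ Finset.univ.filter (fun v => G.Adj u v ∧ Gp.Adj u v),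
          1 / Real.sqrt ((G.degree u : ℝ) * (G.degree v : ℝ))) ∧
    ((alphaU G Gp u / (1 - alphaU G Gp u)) *
        ∑ v ∈ Finset.univ.filter (fun v => G.Adj u v ∧ Gp.Adj u v),
          1 / Real.sqrt ((G.degree u : ℝ) * (G.degree v : ℝ)) ≤
      (alphaU G Gp u / (1 - alphaU G Gp u)) *
        (((G.degree u : ℝ) -
            ((Finset.univ.filter (fun v => G.Adj u v ∧ ¬ Gp.Adj u v)).card : ℝ)) /
          Real.sqrt ((G.degree u : ℝ) *
            (G.neighborFinset u).inf' (hG u) (fun v => (G.degree v : ℝ))))) := by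
  obtain ⟨ha0, ha1⟩ := hα
  set a := alphaU G Gp u with hadef
  have hdeg : ∀ v, (0:ℝ) < (G.degree v : ℝ) := by
    intro v
    exact_mod_cast Finset.card_pos.mpr (hG v)
  have hbound : ∀ v ∈ insert u (G.neighborFinset u),
      (1-a) * (G.degree v : ℝ) ≤ (Gp.degree v : ℝ) ∧
      (Gp.degree v : ℝ) ≤ (1+a) * (G.degree v : ℝ) := by
    intro v hv
    have h : |(Gp.degree v : ℝ) - (G.degree v : ℝ)| / (G.degree v : ℝ) ≤ a :=
      Finset.le_sup' (f := fun v =>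
        |(Gp.degree v : ℝ) - (G.degree v : ℝ)| / (G.degree v : ℝ)) hv
    rw [div_le_iff₀ (hdeg v)] at h
    have h' := abs_le.mp h
    constructor <;> nlinarith [h'.1, h'.2]
  have hu := hbound u (Finset.mem_insert_self _ _)
  constructor
  · rw [Finset.mul_sum]
    apply Finset.sum_le_sum
    intro v hv
    have hadj : G.Adj u v := (Finset.mem_filter.mp hv).2.1
    have hv' := hbound v (Finset.mem_insert_of_mem
      ((SimpleGraph.mem_neighborFinset _ _ _).mpr hadj))
    exact aux_ratio a _ _ _ _ ha0 ha1 (hdeg u) (hdeg v) hu.1 hu.2 hv'.1 hv'.2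
  · apply mul_le_mul_of_nonneg_left _ (div_nonneg ha0 (by linarith))
    set δ := (G.neighborFinset u).inf' (hG u) (fun v => (G.degree v : ℝ)) with hδdef
    have hδpos : (0:ℝ) < δ := by
      rw [hδdef, Finset.lt_inf'_iff]
      intro b _
      exact hdeg b
    have hsq : 0 < Real.sqrt ((G.degree u : ℝ) * δ) := Real.sqrt_pos.mpr
      (mul_pos (hdeg u) hδpos)
    have hcard : ((Finset.univ.filter (fun v => G.Adj u v ∧ Gp.Adj u v)).card : ℝ) =
        (G.degree u : ℝ) -
          ((Finset.univ.filter (fun v => G.Adj u v ∧ ¬ Gp.Adj u v)).card : ℝ) := by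
      have h := Finset.card_filter_add_card_filter_not
        (s := Finset.univ.filter (fun v => G.Adj u v)) (p := fun v => Gp.Adj u v)
      rw [Finset.filter_filter, Finset.filter_filter] at h
      have hd : (Finset.univ.filter (fun v => G.Adj u v)).card = G.degree u := by
        rw [← SimpleGraph.neighborFinset_eq_filter]
        rfl
      rw [hd] at h
      have := congrArg (fun n : ℕ => (n : ℝ)) h
      push_cast at this
      linarith
    calc ∑ v ∈ Finset.univ.filter (fun v => G.Adj u v ∧ Gp.Adj u v),
          1 / Real.sqrt ((G.degree u : ℝ) * (G.degree v : ℝ))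
        ≤ ∑ _v ∈ Finset.univ.filter (fun v => G.Adj u v ∧ Gp.Adj u v),
          1 / Real.sqrt ((G.degree u : ℝ) * δ) := by
          apply Finset.sum_le_sum
          intro v hv
          have hadj : G.Adj u v := (Finset.mem_filter.mp hv).2.1
          have hδle : δ ≤ (G.degree v : ℝ) := Finset.inf'_le _
            ((SimpleGraph.mem_neighborFinset _ _ _).mpr hadj)
          apply one_div_le_one_div_of_le hsq
          apply Real.sqrt_le_sqrt
          exact mul_le_mul_of_nonneg_left hδle (hdeg u).le
      _ = ((Finset.univ.filter (fun v => G.Adj u v ∧ Gp.Adj u v)).card : ℝ) *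
            (1 / Real.sqrt ((G.degree u : ℝ) * δ)) := by
          rw [Finset.sum_const, nsmul_eq_mul]
      _ = ((G.degree u : ℝ) -
            ((Finset.univ.filter (fun v => G.Adj u v ∧ ¬ Gp.Adj u v)).card : ℝ)) /
          Real.sqrt ((G.degree u : ℝ) * δ) := by
          rw [hcard]
          ring
end

section
/- Let G and G_p be simple graphs on a common finite vertex set, neither having isolated vertices, with normalized Laplacians L and L_p and error matrix E = L_p − L. Let u be a vertex with α_u ∈ [0,1). Then the ℓ1 norm of row u of E satisfies ‖E_u‖₁ ≤ Δ_u⁻/√(d_u δ_u) + Δ_u⁺/√(d_u' δ_u') + (α_u/(1−α_u)) · (d_u − Δ_u⁻)/√(d_u δ_u). -/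
/-- The normalized Laplacian of a simple graph. -/
noncomputable def normLap {V : Type*} [Fintype V] [DecidableEq V]
    (G : SimpleGraph V) [DecidableRel G.Adj] : Matrix V V ℝ :=
  fun u v =>
    if u = v then 1
    else if G.Adj u v then -(1 / Real.sqrt ((G.degree u : ℝ) * (G.degree v : ℝ)))
    else 0

lemma key_ineq (α s t : ℝ) (hs : 0 < s) (hα0 : 0 ≤ α) (hα1 : α < 1)
    (h1 : (1 - α) * s ≤ t) (h2 : t ≤ (1 + α) * s) :
    |1 / s - 1 / t| ≤ α / ((1 - α) * s) := by
  have hα1' : 0 < 1 - α := by linarith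
  have ht : 0 < t := lt_of_lt_of_le (by positivity) h1
  have habs : |t - s| ≤ α * s := by
    rw [abs_le]; constructor <;> nlinarith
  have heq : 1 / s - 1 / t = (t - s) / (s * t) := by
    rw [div_sub_div _ _ hs.ne' ht.ne', one_mul, mul_one]
  rw [heq, abs_div, abs_of_pos (mul_pos hs ht)]
  calc |t - s| / (s * t) ≤ (α * s) / (s * ((1 - α) * s)) := by
        apply div_le_div₀ (mul_nonneg hα0 hs.le) habs (mul_pos hs (mul_pos hα1' hs))
        exact mul_le_mul_of_nonneg_left h1 hs.le
    _ = α / ((1 - α) * s) := by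
        rw [div_eq_div_iff (mul_pos hs (mul_pos hα1' hs)).ne' (mul_pos hα1' hs).ne']
        ring

set_option maxHeartbeats 1600000 in
/-- Bound on the ℓ1 norm of row `u` of the error matrix `E = L_p - L`:
`‖E_u‖₁ ≤ Δ_u⁻/√(d_u δ_u) + Δ_u⁺/√(d_u' δ_u') + (α_u/(1-α_u)) (d_u - Δ_u⁻)/√(d_u δ_u)`. -/
theorem row_l1_norm_error_matrix_bound {V : Type*} [Fintype V] [DecidableEq V]
    (G Gp : SimpleGraph V) [DecidableRel G.Adj] [DecidableRel Gp.Adj]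
    (hG : ∀ v, (G.neighborFinset v).Nonempty)
    (hGp : ∀ v, (Gp.neighborFinset v).Nonempty)
    (u : V) (hα : alphaU G Gp u ∈ Set.Ico (0 : ℝ) 1) :
    ∑ v, |(normLap Gp - normLap G) u v| ≤
      ((Finset.univ.filter (fun v => G.Adj u v ∧ ¬ Gp.Adj u v)).card : ℝ) /
          Real.sqrt ((G.degree u : ℝ) *
            (G.neighborFinset u).inf' (hG u) (fun v => (G.degree v : ℝ))) +
      ((Finset.univ.filter (fun v => Gp.Adj u v ∧ ¬ G.Adj u v)).card : ℝ) /
          Real.sqrt ((Gp.degree u : ℝ) *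
            (Gp.neighborFinset u).inf' (hGp u) (fun v => (Gp.degree v : ℝ))) +
      (alphaU G Gp u / (1 - alphaU G Gp u)) *
        (((G.degree u : ℝ) -
            ((Finset.univ.filter (fun v => G.Adj u v ∧ ¬ Gp.Adj u v)).card : ℝ)) /
          Real.sqrt ((G.degree u : ℝ) *
            (G.neighborFinset u).inf' (hG u) (fun v => (G.degree v : ℝ)))) := by
  classical
  obtain ⟨hα0, hα1⟩ := hα
  set α := alphaU G Gp u with hαdef
  have hα1' : (0:ℝ) < 1 - α := by linarith
  -- positivity of degrees
  have hdeg : ∀ v, 0 < (G.degree v : ℝ) := by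
    intro v
    have := Finset.card_pos.mpr (hG v)
    rw [← SimpleGraph.card_neighborFinset_eq_degree]
    exact_mod_cast this
  have hdegp : ∀ v, 0 < (Gp.degree v : ℝ) := by
    intro v
    have := Finset.card_pos.mpr (hGp v)
    rw [← SimpleGraph.card_neighborFinset_eq_degree]
    exact_mod_cast this
  set δ : ℝ := (G.neighborFinset u).inf' (hG u) (fun v => (G.degree v : ℝ)) with hδdef
  set δ' : ℝ := (Gp.neighborFinset u).inf' (hGp u) (fun v => (Gp.degree v : ℝ)) with hδ'def
  have hδpos : 0 < δ := by
    rw [hδdef, Finset.lt_inf'_iff]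
    exact fun v _ => hdeg v
  have hδ'pos : 0 < δ' := by
    rw [hδ'def, Finset.lt_inf'_iff]
    exact fun v _ => hdegp v
  have hδle : ∀ v, G.Adj u v → δ ≤ (G.degree v : ℝ) := by
    intro v hv
    exact Finset.inf'_le _ ((G.mem_neighborFinset u v).mpr hv)
  have hδ'le : ∀ v, Gp.Adj u v → δ' ≤ (Gp.degree v : ℝ) := by
    intro v hv
    exact Finset.inf'_le _ ((Gp.mem_neighborFinset u v).mpr hv)
  have hX : 0 < Real.sqrt ((G.degree u : ℝ) * δ) :=
    Real.sqrt_pos.mpr (mul_pos (hdeg u) hδpos)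
  have hX' : 0 < Real.sqrt ((Gp.degree u : ℝ) * δ') :=
    Real.sqrt_pos.mpr (mul_pos (hdegp u) hδ'pos)
  -- α bounds degrees
  have hαbound : ∀ w ∈ insert u (G.neighborFinset u),
      |(Gp.degree w : ℝ) - (G.degree w : ℝ)| ≤ α * (G.degree w : ℝ) := by
    intro w hw
    have h := Finset.le_sup' (b := w)
      (f := fun v => |(Gp.degree v : ℝ) - (G.degree v : ℝ)| / (G.degree v : ℝ)) hw
    rw [hαdef, alphaU]
    rw [div_le_iff₀ (hdeg w)] at h
    linarith [h]
  -- the three sets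
  set S1 := Finset.univ.filter (fun v => G.Adj u v ∧ ¬ Gp.Adj u v) with hS1
  set S2 := Finset.univ.filter (fun v => Gp.Adj u v ∧ ¬ G.Adj u v) with hS2
  set S3 := Finset.univ.filter (fun v => G.Adj u v ∧ Gp.Adj u v) with hS3
  have hd12 : Disjoint S1 S2 := by
    rw [Finset.disjoint_left]; intro a ha ha'
    simp only [hS1, hS2, Finset.mem_filter] at ha ha'; tauto
  have hd123 : Disjoint (S1 ∪ S2) S3 := by
    rw [Finset.disjoint_left]; intro a ha ha'
    simp only [hS1, hS2, hS3, Finset.mem_union, Finset.mem_filter] at ha ha'; tauto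
  have hsplit : ∑ v, |(normLap Gp - normLap G) u v|
      = ∑ v ∈ S1, |(normLap Gp - normLap G) u v|
        + ∑ v ∈ S2, |(normLap Gp - normLap G) u v|
        + ∑ v ∈ S3, |(normLap Gp - normLap G) u v| := by
    rw [← Finset.sum_union hd12, ← Finset.sum_union hd123]
    symm
    apply Finset.sum_subset (Finset.subset_univ _)
    intro v _ hv
    simp only [hS1, hS2, hS3, Finset.mem_union, Finset.mem_filter, Finset.mem_univ,
      true_and, not_or, not_and, not_not] at hv
    have h1 : ¬ G.Adj u v := by tauto
    have h2 : ¬ Gp.Adj u v := by tauto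
    by_cases huv : u = v <;> simp [Matrix.sub_apply, normLap, huv, h1, h2]
  -- bound on S1 terms
  have hb1 : ∀ v ∈ S1, |(normLap Gp - normLap G) u v|
      ≤ 1 / Real.sqrt ((G.degree u : ℝ) * δ) := by
    intro v hv
    simp only [hS1, Finset.mem_filter] at hv
    obtain ⟨-, hadj, hnadj⟩ := hv
    have hne : u ≠ v := hadj.ne
    have hE : (normLap Gp - normLap G) u v
        = 1 / Real.sqrt ((G.degree u : ℝ) * (G.degree v : ℝ)) := by
      simp [Matrix.sub_apply, normLap, hne, hadj, hnadj]
    rw [hE, abs_of_nonneg (by positivity)]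
    apply one_div_le_one_div_of_le hX
    apply Real.sqrt_le_sqrt
    exact mul_le_mul_of_nonneg_left (hδle v hadj) (hdeg u).le
  -- bound on S2 terms
  have hb2 : ∀ v ∈ S2, |(normLap Gp - normLap G) u v|
      ≤ 1 / Real.sqrt ((Gp.degree u : ℝ) * δ') := by
    intro v hv
    simp only [hS2, Finset.mem_filter] at hv
    obtain ⟨-, hadj, hnadj⟩ := hv
    have hne : u ≠ v := hadj.ne
    have hE : (normLap Gp - normLap G) u v
        = -(1 / Real.sqrt ((Gp.degree u : ℝ) * (Gp.degree v : ℝ))) := by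
      simp [Matrix.sub_apply, normLap, hne, hadj, hnadj]
    rw [hE, abs_neg, abs_of_nonneg (by positivity)]
    apply one_div_le_one_div_of_le hX'
    apply Real.sqrt_le_sqrt
    exact mul_le_mul_of_nonneg_left (hδ'le v hadj) (hdegp u).le
  -- bound on S3 terms
  have hb3 : ∀ v ∈ S3, |(normLap Gp - normLap G) u v|
      ≤ α / ((1 - α) * Real.sqrt ((G.degree u : ℝ) * δ)) := by
    intro v hv
    simp only [hS3, Finset.mem_filter] at hv
    obtain ⟨-, hadj, hadj'⟩ := hv
    have hne : u ≠ v := hadj.ne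
    set s := Real.sqrt ((G.degree u : ℝ) * (G.degree v : ℝ)) with hsdef
    set t := Real.sqrt ((Gp.degree u : ℝ) * (Gp.degree v : ℝ)) with htdef
    have hspos : 0 < s := Real.sqrt_pos.mpr (mul_pos (hdeg u) (hdeg v))
    have hE : (normLap Gp - normLap G) u v = 1 / s - 1 / t := by
      rw [hsdef, htdef]
      simp only [Matrix.sub_apply, normLap, if_neg hne, if_pos hadj, if_pos hadj']
      ring
    have hbu := hαbound u (Finset.mem_insert_self _ _)
    have hbv := hαbound v (Finset.mem_insert_of_mem ((G.mem_neighborFinset u v).mpr hadj))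
    rw [abs_le] at hbu hbv
    have h1u : (1 - α) * (G.degree u : ℝ) ≤ (Gp.degree u : ℝ) := by nlinarith [hbu.1]
    have h1v : (1 - α) * (G.degree v : ℝ) ≤ (Gp.degree v : ℝ) := by nlinarith [hbv.1]
    have h2u : (Gp.degree u : ℝ) ≤ (1 + α) * (G.degree u : ℝ) := by nlinarith [hbu.2]
    have h2v : (Gp.degree v : ℝ) ≤ (1 + α) * (G.degree v : ℝ) := by nlinarith [hbv.2]
    have hlo : (1 - α)^2 * ((G.degree u : ℝ) * (G.degree v : ℝ))
        ≤ (Gp.degree u : ℝ) * (Gp.degree v : ℝ) := by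
      calc (1 - α)^2 * ((G.degree u : ℝ) * (G.degree v : ℝ))
          = ((1 - α) * (G.degree u : ℝ)) * ((1 - α) * (G.degree v : ℝ)) := by ring
        _ ≤ (Gp.degree u : ℝ) * (Gp.degree v : ℝ) :=
            mul_le_mul h1u h1v (mul_nonneg hα1'.le (hdeg v).le) (hdegp u).le
    have hhi : (Gp.degree u : ℝ) * (Gp.degree v : ℝ)
        ≤ (1 + α)^2 * ((G.degree u : ℝ) * (G.degree v : ℝ)) := by
      calc (Gp.degree u : ℝ) * (Gp.degree v : ℝ)
          ≤ ((1 + α) * (G.degree u : ℝ)) * ((1 + α) * (G.degree v : ℝ)) :=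
            mul_le_mul h2u h2v (hdegp v).le
              (mul_nonneg (by linarith : (0:ℝ) ≤ 1 + α) (hdeg u).le)
        _ = (1 + α)^2 * ((G.degree u : ℝ) * (G.degree v : ℝ)) := by ring
    have h1 : (1 - α) * s ≤ t := by
      have := Real.sqrt_le_sqrt hlo
      rwa [Real.sqrt_mul (sq_nonneg _), Real.sqrt_sq hα1'.le] at this
    have h2 : t ≤ (1 + α) * s := by
      have := Real.sqrt_le_sqrt hhi
      rwa [Real.sqrt_mul (sq_nonneg _), Real.sqrt_sq (by linarith : (0:ℝ) ≤ 1 + α)] at this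
    have hkey := key_ineq α s t hspos hα0 hα1 h1 h2
    rw [hE]
    refine hkey.trans ?_
    apply div_le_div_of_nonneg_left hα0 (by positivity)
    apply mul_le_mul_of_nonneg_left _ hα1'.le
    apply Real.sqrt_le_sqrt
    exact mul_le_mul_of_nonneg_left (hδle v hadj) (hdeg u).le
  -- counting
  have hcard : (S1.card : ℝ) + (S3.card : ℝ) = (G.degree u : ℝ) := by
    have h1 : S1 = (Finset.univ.filter (fun v => G.Adj u v)).filter
        (fun v => ¬ Gp.Adj u v) := by
      rw [hS1, Finset.filter_filter]
    have h3 : S3 = (Finset.univ.filter (fun v => G.Adj u v)).filter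
        (fun v => Gp.Adj u v) := by
      rw [hS3, Finset.filter_filter]
    have := Finset.card_filter_add_card_filter_not
      (s := Finset.univ.filter (fun v => G.Adj u v)) (p := fun v => Gp.Adj u v)
    have hdeg' : (Finset.univ.filter (fun v => G.Adj u v)).card = G.degree u := by
      rw [← SimpleGraph.card_neighborFinset_eq_degree, SimpleGraph.neighborFinset_eq_filter]
    rw [h1, h3]
    push_cast [← hdeg', ← this]
    ring
  calc ∑ v, |(normLap Gp - normLap G) u v|
      = ∑ v ∈ S1, |(normLap Gp - normLap G) u v|
        + ∑ v ∈ S2, |(normLap Gp - normLap G) u v|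
        + ∑ v ∈ S3, |(normLap Gp - normLap G) u v| := hsplit
    _ ≤ (S1.card : ℝ) * (1 / Real.sqrt ((G.degree u : ℝ) * δ))
        + (S2.card : ℝ) * (1 / Real.sqrt ((Gp.degree u : ℝ) * δ'))
        + (S3.card : ℝ) * (α / ((1 - α) * Real.sqrt ((G.degree u : ℝ) * δ))) := by
        gcongr ?_ + ?_ + ?_
        · calc ∑ v ∈ S1, |(normLap Gp - normLap G) u v|
              ≤ S1.card • (1 / Real.sqrt ((G.degree u : ℝ) * δ)) :=
                Finset.sum_le_card_nsmul _ _ _ hb1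
          _ = _ := by rw [nsmul_eq_mul]
        · calc ∑ v ∈ S2, |(normLap Gp - normLap G) u v|
              ≤ S2.card • (1 / Real.sqrt ((Gp.degree u : ℝ) * δ')) :=
                Finset.sum_le_card_nsmul _ _ _ hb2
          _ = _ := by rw [nsmul_eq_mul]
        · calc ∑ v ∈ S3, |(normLap Gp - normLap G) u v|
              ≤ S3.card • (α / ((1 - α) * Real.sqrt ((G.degree u : ℝ) * δ))) :=
                Finset.sum_le_card_nsmul _ _ _ hb3
          _ = _ := by rw [nsmul_eq_mul]
    _ = (S1.card : ℝ) / Real.sqrt ((G.degree u : ℝ) * δ)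
        + (S2.card : ℝ) / Real.sqrt ((Gp.degree u : ℝ) * δ')
        + (α / (1 - α)) * (((G.degree u : ℝ) - (S1.card : ℝ))
            / Real.sqrt ((G.degree u : ℝ) * δ)) := by
        have h3 : (G.degree u : ℝ) - (S1.card : ℝ) = (S3.card : ℝ) := by linarith
        rw [h3, ← div_div]
        ring
end

section
/- Let G and G_p be simple graphs on a common finite vertex set, neither having isolated vertices, with normalized Laplacians L and L_p and error matrix E = L_p − L. Assume α_u ∈ [0,1) for every vertex u. Then the ℓ2 operator norm of E satisfies ‖E‖₂ ≤ max_{u ∈ V} { Δ_u⁻/√(d_u δ_u) + Δ_u⁺/√(d_u' δ_u') + (α_u/(1−α_u)) · (d_u − Δ_u⁻)/√(d_u δ_u) }. -/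
open scoped Matrix.Norms.L2Operator

lemma l2_opNorm_le_of_rowsum {n : Type*} [Fintype n] [DecidableEq n] (A : Matrix n n ℝ)
    (hsym : ∀ u v, A u v = A v u) {c : ℝ} (hc : 0 ≤ c)
    (h : ∀ u, ∑ v, |A u v| ≤ c) : ‖A‖ ≤ c := by
  rw [Matrix.l2_opNorm_def]
  refine ContinuousLinearMap.opNorm_le_bound _ hc fun x => ?_
  simp only [LinearEquiv.trans_apply, LinearMap.coe_toContinuousLinearMap',
    Matrix.toEuclideanLin_apply]
  set y : n → ℝ := (WithLp.equiv 2 (n → ℝ)) x with hy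
  have hxnorm : ‖x‖ = Real.sqrt (∑ v, (y v) ^ 2) := by
    rw [EuclideanSpace.norm_eq]
    congr 1
    refine Finset.sum_congr rfl fun v _ => ?_
    rw [Real.norm_eq_abs, sq_abs]
    rfl
  have hAx : ‖(WithLp.equiv 2 (n → ℝ)).symm (A.mulVec y)‖
      = Real.sqrt (∑ u, (A.mulVec y u) ^ 2) := by
    rw [EuclideanSpace.norm_eq]
    congr 1
    refine Finset.sum_congr rfl fun v _ => ?_
    rw [Real.norm_eq_abs, sq_abs]
    rfl
  rw [show ‖WithLp.toLp 2 (A.mulVec x.ofLp)‖ = ‖(WithLp.equiv 2 (n → ℝ)).symm (A.mulVec y)‖ from rfl,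
    hAx, hxnorm]
  have key : ∑ u, (A.mulVec y u) ^ 2 ≤ c ^ 2 * ∑ v, (y v) ^ 2 := by
    have step1 : ∀ u, (A.mulVec y u) ^ 2 ≤ c * ∑ v, |A u v| * (y v) ^ 2 := by
      intro u
      have h1 : (A.mulVec y u) ^ 2 ≤ (∑ v, |A u v| * |y v|) ^ 2 := by
        have habs : |A.mulVec y u| ≤ ∑ v, |A u v| * |y v| := by
          refine (Finset.abs_sum_le_sum_abs _ _).trans ?_
          refine le_of_eq (Finset.sum_congr rfl fun v _ => ?_)
          rw [abs_mul]
        calc (A.mulVec y u) ^ 2 = |A.mulVec y u| ^ 2 := (sq_abs _).symm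
          _ ≤ (∑ v, |A u v| * |y v|) ^ 2 := by
              apply pow_le_pow_left₀ (abs_nonneg _) habs
      have h2 : (∑ v, |A u v| * |y v|) ^ 2 ≤ (∑ v, |A u v|) * ∑ v, |A u v| * (y v) ^ 2 := by
        have := Finset.sum_mul_sq_le_sq_mul_sq Finset.univ
          (fun v => Real.sqrt (|A u v|)) (fun v => Real.sqrt (|A u v|) * |y v|)
        calc (∑ v, |A u v| * |y v|) ^ 2
            = (∑ v, Real.sqrt (|A u v|) * (Real.sqrt (|A u v|) * |y v|)) ^ 2 := by
              congr 1; refine Finset.sum_congr rfl fun v _ => ?_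
              rw [← mul_assoc, Real.mul_self_sqrt (abs_nonneg _)]
          _ ≤ (∑ v, Real.sqrt (|A u v|) ^ 2) * ∑ v, (Real.sqrt (|A u v|) * |y v|) ^ 2 := this
          _ = (∑ v, |A u v|) * ∑ v, |A u v| * (y v) ^ 2 := by
              congr 1
              · refine Finset.sum_congr rfl fun v _ => Real.sq_sqrt (abs_nonneg _)
              · refine Finset.sum_congr rfl fun v _ => ?_
                rw [mul_pow, Real.sq_sqrt (abs_nonneg _), sq_abs]
      refine h1.trans (h2.trans ?_)
      apply mul_le_mul_of_nonneg_right (h u)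
      exact Finset.sum_nonneg fun v _ => mul_nonneg (abs_nonneg _) (sq_nonneg _)
    calc ∑ u, (A.mulVec y u) ^ 2 ≤ ∑ u, c * ∑ v, |A u v| * (y v) ^ 2 :=
          Finset.sum_le_sum fun u _ => step1 u
      _ = c * ∑ v, (y v) ^ 2 * ∑ u, |A u v| := by
          rw [← Finset.mul_sum, Finset.sum_comm]
          congr 1
          refine Finset.sum_congr rfl fun v _ => ?_
          rw [Finset.mul_sum]
          refine Finset.sum_congr rfl fun u _ => ?_
          ring
      _ ≤ c * ∑ v, (y v) ^ 2 * c := by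
          apply mul_le_mul_of_nonneg_left _ hc
          refine Finset.sum_le_sum fun v _ => ?_
          apply mul_le_mul_of_nonneg_left _ (sq_nonneg _)
          calc ∑ u, |A u v| = ∑ u, |A v u| := by
                refine Finset.sum_congr rfl fun u _ => by rw [hsym]
            _ ≤ c := h v
      _ = c ^ 2 * ∑ v, (y v) ^ 2 := by rw [← Finset.sum_mul]; ring
  calc Real.sqrt (∑ u, (A.mulVec y u) ^ 2) ≤ Real.sqrt (c ^ 2 * ∑ v, (y v) ^ 2) :=
        Real.sqrt_le_sqrt key
    _ = c * Real.sqrt (∑ v, (y v) ^ 2) := by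
        rw [Real.sqrt_mul (sq_nonneg c), Real.sqrt_sq hc]

/-- **Theorem 1** of the paper: if `α_u ∈ [0,1)` for all vertices `u`, then
`‖E‖₂ ≤ max_u { Δ_u⁻/√(d_u δ_u) + Δ_u⁺/√(d_u' δ_u')
  + (α_u/(1-α_u)) (d_u - Δ_u⁻)/√(d_u δ_u) }`. -/
theorem error_matrix_l2_opNorm_bound {V : Type*} [Fintype V] [DecidableEq V] [Nonempty V]
    (G Gp : SimpleGraph V) [DecidableRel G.Adj] [DecidableRel Gp.Adj]
    (hG : ∀ v, (G.neighborFinset v).Nonempty)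
    (hGp : ∀ v, (Gp.neighborFinset v).Nonempty)
    (hα : ∀ u, alphaU G Gp u ∈ Set.Ico (0 : ℝ) 1) :
    ‖normLap Gp - normLap G‖ ≤
      Finset.univ.sup' Finset.univ_nonempty (fun u =>
        ((Finset.univ.filter (fun v => G.Adj u v ∧ ¬ Gp.Adj u v)).card : ℝ) /
            Real.sqrt ((G.degree u : ℝ) *
              (G.neighborFinset u).inf' (hG u) (fun v => (G.degree v : ℝ))) +
        ((Finset.univ.filter (fun v => Gp.Adj u v ∧ ¬ G.Adj u v)).card : ℝ) /
            Real.sqrt ((Gp.degree u : ℝ) *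
              (Gp.neighborFinset u).inf' (hGp u) (fun v => (Gp.degree v : ℝ))) +
        (alphaU G Gp u / (1 - alphaU G Gp u)) *
          (((G.degree u : ℝ) -
              ((Finset.univ.filter (fun v => G.Adj u v ∧ ¬ Gp.Adj u v)).card : ℝ)) /
            Real.sqrt ((G.degree u : ℝ) *
              (G.neighborFinset u).inf' (hG u) (fun v => (G.degree v : ℝ))))) := by
  classical
  have hdpos : ∀ v, (0 : ℝ) < (G.degree v : ℝ) := fun v => by
    have := Finset.card_pos.mpr (hG v)
    rw [SimpleGraph.card_neighborFinset_eq_degree] at this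
    exact_mod_cast this
  have hd'pos : ∀ v, (0 : ℝ) < (Gp.degree v : ℝ) := fun v => by
    have := Finset.card_pos.mpr (hGp v)
    rw [SimpleGraph.card_neighborFinset_eq_degree] at this
    exact_mod_cast this
  have hsym : ∀ u v, (normLap Gp - normLap G) u v = (normLap Gp - normLap G) v u := by
    intro u v
    by_cases h : u = v
    · subst h; rfl
    · have h' : ¬ v = u := fun e => h e.symm
      have e1 : Gp.Adj u v ↔ Gp.Adj v u := Gp.adj_comm u v
      have e2 : G.Adj u v ↔ G.Adj v u := G.adj_comm u v
      simp only [Matrix.sub_apply, normLap, if_neg h, if_neg h', e1, e2,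
        mul_comm ((G.degree u : ℝ)), mul_comm ((Gp.degree u : ℝ))]
  -- the row-sum bound
  have hrow : ∀ u, ∑ v, |(normLap Gp - normLap G) u v| ≤
      ((Finset.univ.filter (fun v => G.Adj u v ∧ ¬ Gp.Adj u v)).card : ℝ) /
          Real.sqrt ((G.degree u : ℝ) *
            (G.neighborFinset u).inf' (hG u) (fun v => (G.degree v : ℝ))) +
      ((Finset.univ.filter (fun v => Gp.Adj u v ∧ ¬ G.Adj u v)).card : ℝ) /
          Real.sqrt ((Gp.degree u : ℝ) *
            (Gp.neighborFinset u).inf' (hGp u) (fun v => (Gp.degree v : ℝ))) +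
      (alphaU G Gp u / (1 - alphaU G Gp u)) *
        (((G.degree u : ℝ) -
            ((Finset.univ.filter (fun v => G.Adj u v ∧ ¬ Gp.Adj u v)).card : ℝ)) /
          Real.sqrt ((G.degree u : ℝ) *
            (G.neighborFinset u).inf' (hG u) (fun v => (G.degree v : ℝ)))) := by
    intro u
    obtain ⟨hα0, hα1⟩ := hα u
    have h1α : (0 : ℝ) < 1 - alphaU G Gp u := by linarith
    have h1α' : (0 : ℝ) < 1 + alphaU G Gp u := by linarith
    -- shorthand notations (as plain terms, not `set`, to keep syntactic match)
    have hδpos : (0 : ℝ) < (G.neighborFinset u).inf' (hG u) (fun v => (G.degree v : ℝ)) := by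
      rw [Finset.lt_inf'_iff]
      exact fun v _ => hdpos v
    have hδ'pos : (0 : ℝ) < (Gp.neighborFinset u).inf' (hGp u) (fun v => (Gp.degree v : ℝ)) := by
      rw [Finset.lt_inf'_iff]
      exact fun v _ => hd'pos v
    have hsq1 : (0 : ℝ) < Real.sqrt ((G.degree u : ℝ) *
        (G.neighborFinset u).inf' (hG u) (fun v => (G.degree v : ℝ))) :=
      Real.sqrt_pos.mpr (mul_pos (hdpos u) hδpos)
    have hsq2 : (0 : ℝ) < Real.sqrt ((Gp.degree u : ℝ) *
        (Gp.neighborFinset u).inf' (hGp u) (fun v => (Gp.degree v : ℝ))) :=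
      Real.sqrt_pos.mpr (mul_pos (hd'pos u) hδ'pos)
    -- degree perturbation bounds
    have halpha : ∀ v ∈ insert u (G.neighborFinset u),
        |(Gp.degree v : ℝ) - (G.degree v : ℝ)| ≤ alphaU G Gp u * (G.degree v : ℝ) := by
      intro v hv
      have := Finset.le_sup' (f := fun v => |(Gp.degree v : ℝ) - (G.degree v : ℝ)| /
        (G.degree v : ℝ)) hv
      rw [div_le_iff₀ (hdpos v)] at this
      simpa only [alphaU] using this
    set α := alphaU G Gp u with hαdef
    set δ1 := (G.neighborFinset u).inf' (hG u) (fun v => (G.degree v : ℝ)) with hδ1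
    set δ2 := (Gp.neighborFinset u).inf' (hGp u) (fun v => (Gp.degree v : ℝ)) with hδ2
    set sq1 := Real.sqrt ((G.degree u : ℝ) * δ1) with hsq1d
    set sq2 := Real.sqrt ((Gp.degree u : ℝ) * δ2) with hsq2d
    set Sdel := Finset.univ.filter (fun v => G.Adj u v ∧ ¬ Gp.Adj u v) with hSdel
    set Sadd := Finset.univ.filter (fun v => Gp.Adj u v ∧ ¬ G.Adj u v) with hSadd
    set Sboth := Finset.univ.filter (fun v => G.Adj u v ∧ Gp.Adj u v) with hSboth
    -- monotone comparisons with the minimum degree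
    have hmono : ∀ v, G.Adj u v →
        1 / Real.sqrt ((G.degree u : ℝ) * (G.degree v : ℝ)) ≤ 1 / sq1 := by
      intro v hv
      apply one_div_le_one_div_of_le hsq1
      apply Real.sqrt_le_sqrt
      exact mul_le_mul_of_nonneg_left
        (Finset.inf'_le _ ((SimpleGraph.mem_neighborFinset _ _ _).mpr hv)) (hdpos u).le
    have hmono' : ∀ v, Gp.Adj u v →
        1 / Real.sqrt ((Gp.degree u : ℝ) * (Gp.degree v : ℝ)) ≤ 1 / sq2 := by
      intro v hv
      apply one_div_le_one_div_of_le hsq2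
      apply Real.sqrt_le_sqrt
      exact mul_le_mul_of_nonneg_left
        (Finset.inf'_le _ ((SimpleGraph.mem_neighborFinset _ _ _).mpr hv)) (hd'pos u).le
    -- the common-edge estimate
    have hkey : ∀ v, G.Adj u v → Gp.Adj u v →
        |(normLap Gp - normLap G) u v| ≤ α / (1 - α) * (1 / sq1) := by
      intro v hadj hadj'
      have hne : u ≠ v := G.ne_of_adj hadj
      have hvmem : v ∈ insert u (G.neighborFinset u) :=
        Finset.mem_insert_of_mem ((SimpleGraph.mem_neighborFinset _ _ _).mpr hadj)
      have hEuv : (normLap Gp - normLap G) u v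
          = 1 / Real.sqrt ((G.degree u : ℝ) * (G.degree v : ℝ))
            - 1 / Real.sqrt ((Gp.degree u : ℝ) * (Gp.degree v : ℝ)) := by
        simp only [Matrix.sub_apply, normLap, if_neg hne, if_pos hadj, if_pos hadj']
        ring
      set a := Real.sqrt ((G.degree u : ℝ) * (G.degree v : ℝ)) with hadef
      set b := Real.sqrt ((Gp.degree u : ℝ) * (Gp.degree v : ℝ)) with hbdef
      have hapos : 0 < a := Real.sqrt_pos.mpr (mul_pos (hdpos u) (hdpos v))
      have hbpos : 0 < b := Real.sqrt_pos.mpr (mul_pos (hd'pos u) (hd'pos v))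
      have hU := abs_le.mp (halpha u (Finset.mem_insert_self _ _))
      have hV := abs_le.mp (halpha v hvmem)
      have hblow : (1 - α) * a ≤ b := by
        have hmul : ((1 - α) * (G.degree u : ℝ)) * ((1 - α) * (G.degree v : ℝ))
            ≤ (Gp.degree u : ℝ) * (Gp.degree v : ℝ) := by
          apply mul_le_mul (by linarith [hU.1]) (by linarith [hV.1])
            (mul_nonneg h1α.le (hdpos v).le) (hd'pos u).le
        calc (1 - α) * a
            = Real.sqrt (((1 - α) * (G.degree u : ℝ)) * ((1 - α) * (G.degree v : ℝ))) := by
              rw [show ((1 - α) * (G.degree u : ℝ)) * ((1 - α) * (G.degree v : ℝ))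
                  = (1 - α) ^ 2 * ((G.degree u : ℝ) * (G.degree v : ℝ)) by ring,
                Real.sqrt_mul (sq_nonneg _), Real.sqrt_sq h1α.le, hadef]
          _ ≤ b := Real.sqrt_le_sqrt hmul
      have hbhigh : b ≤ (1 + α) * a := by
        have hmul : (Gp.degree u : ℝ) * (Gp.degree v : ℝ)
            ≤ ((1 + α) * (G.degree u : ℝ)) * ((1 + α) * (G.degree v : ℝ)) := by
          apply mul_le_mul (by linarith [hU.2]) (by linarith [hV.2])
            (hd'pos v).le (mul_nonneg h1α'.le (hdpos u).le)
        calc b ≤ Real.sqrt (((1 + α) * (G.degree u : ℝ)) * ((1 + α) * (G.degree v : ℝ))) :=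
              Real.sqrt_le_sqrt hmul
          _ = (1 + α) * a := by
              rw [show ((1 + α) * (G.degree u : ℝ)) * ((1 + α) * (G.degree v : ℝ))
                  = (1 + α) ^ 2 * ((G.degree u : ℝ) * (G.degree v : ℝ)) by ring,
                Real.sqrt_mul (sq_nonneg _), Real.sqrt_sq h1α'.le, hadef]
      have hb1 : 1 / b ≤ 1 / ((1 - α) * a) :=
        one_div_le_one_div_of_le (mul_pos h1α hapos) hblow
      have hb2 : 1 / ((1 + α) * a) ≤ 1 / b :=
        one_div_le_one_div_of_le hbpos hbhigh
      have habound : |1 / a - 1 / b| ≤ α / (1 - α) * (1 / a) := by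
        rw [abs_le]
        constructor
        · have e1 : 1 / ((1 - α) * a) = 1 / a + α / (1 - α) * (1 / a) := by
            field_simp
            ring
          linarith
        · have e2 : 1 / a - 1 / ((1 + α) * a) = α / (1 + α) * (1 / a) := by
            field_simp
            ring
          have e3 : α / (1 + α) * (1 / a) ≤ α / (1 - α) * (1 / a) := by
            apply mul_le_mul_of_nonneg_right _ (by positivity)
            apply div_le_div_of_nonneg_left hα0 h1α
            linarith
          linarith
      rw [hEuv]
      refine habound.trans ?_
      exact mul_le_mul_of_nonneg_left (hmono v hadj) (by positivity)
    -- splitting the sum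
    have hdisj1 : Disjoint Sdel Sadd := by
      rw [Finset.disjoint_left]
      intro v h1 h2
      rw [hSdel, Finset.mem_filter] at h1
      rw [hSadd, Finset.mem_filter] at h2
      tauto
    have hdisj2 : Disjoint (Sdel ∪ Sadd) Sboth := by
      rw [Finset.disjoint_left]
      intro v h1 h2
      rw [Finset.mem_union, hSdel, hSadd, Finset.mem_filter, Finset.mem_filter] at h1
      rw [hSboth, Finset.mem_filter] at h2
      tauto
    have hdisj3 : Disjoint Sdel Sboth := by
      rw [Finset.disjoint_left]
      intro v h1 h2
      rw [hSdel, Finset.mem_filter] at h1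
      rw [hSboth, Finset.mem_filter] at h2
      tauto
    have hzero : ∀ v ∈ Finset.univ, v ∉ (Sdel ∪ Sadd) ∪ Sboth →
        |(normLap Gp - normLap G) u v| = 0 := by
      intro v _ hv
      rw [Finset.mem_union, Finset.mem_union, hSdel, hSadd, hSboth,
        Finset.mem_filter, Finset.mem_filter, Finset.mem_filter] at hv
      have hn : ¬ G.Adj u v ∧ ¬ Gp.Adj u v := by
        constructor <;> by_cases h1 : G.Adj u v <;> by_cases h2 : Gp.Adj u v <;>
          simp [Finset.mem_univ, h1, h2] at hv ⊢ <;> tauto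
      by_cases h : u = v
      · subst h
        simp [Matrix.sub_apply, normLap]
      · simp [Matrix.sub_apply, normLap, h, hn.1, hn.2]
    have hsplit : ∑ v, |(normLap Gp - normLap G) u v|
        = ∑ v ∈ Sdel, |(normLap Gp - normLap G) u v|
          + ∑ v ∈ Sadd, |(normLap Gp - normLap G) u v|
          + ∑ v ∈ Sboth, |(normLap Gp - normLap G) u v| := by
      rw [← Finset.sum_subset (Finset.subset_univ ((Sdel ∪ Sadd) ∪ Sboth)) hzero,
        Finset.sum_union hdisj2, Finset.sum_union hdisj1]
    -- bounding the three sums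
    have hbound1 : ∑ v ∈ Sdel, |(normLap Gp - normLap G) u v| ≤ (Sdel.card : ℝ) / sq1 := by
      have hstep : ∀ v ∈ Sdel, |(normLap Gp - normLap G) u v| ≤ 1 / sq1 := by
        intro v hv
        rw [hSdel, Finset.mem_filter] at hv
        obtain ⟨-, hadj, hnadj⟩ := hv
        have hne : u ≠ v := G.ne_of_adj hadj
        have hEuv : (normLap Gp - normLap G) u v
            = 1 / Real.sqrt ((G.degree u : ℝ) * (G.degree v : ℝ)) := by
          simp only [Matrix.sub_apply, normLap, if_neg hne, if_pos hadj, if_neg hnadj]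
          ring
        rw [hEuv, abs_of_nonneg (by positivity)]
        exact hmono v hadj
      calc ∑ v ∈ Sdel, |(normLap Gp - normLap G) u v| ≤ Sdel.card • (1 / sq1) :=
            Finset.sum_le_card_nsmul _ _ _ hstep
        _ = (Sdel.card : ℝ) / sq1 := by rw [nsmul_eq_mul, mul_one_div]
    have hbound2 : ∑ v ∈ Sadd, |(normLap Gp - normLap G) u v| ≤ (Sadd.card : ℝ) / sq2 := by
      have hstep : ∀ v ∈ Sadd, |(normLap Gp - normLap G) u v| ≤ 1 / sq2 := by
        intro v hv
        rw [hSadd, Finset.mem_filter] at hv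
        obtain ⟨-, hadj, hnadj⟩ := hv
        have hne : u ≠ v := Gp.ne_of_adj hadj
        have hEuv : (normLap Gp - normLap G) u v
            = -(1 / Real.sqrt ((Gp.degree u : ℝ) * (Gp.degree v : ℝ))) := by
          simp only [Matrix.sub_apply, normLap, if_neg hne, if_pos hadj, if_neg hnadj]
          ring
        rw [hEuv, abs_neg, abs_of_nonneg (by positivity)]
        exact hmono' v hadj
      calc ∑ v ∈ Sadd, |(normLap Gp - normLap G) u v| ≤ Sadd.card • (1 / sq2) :=
            Finset.sum_le_card_nsmul _ _ _ hstep
        _ = (Sadd.card : ℝ) / sq2 := by rw [nsmul_eq_mul, mul_one_div]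
    have hcard : (Sdel.card : ℝ) + (Sboth.card : ℝ) = (G.degree u : ℝ) := by
      have hun : Sdel ∪ Sboth = G.neighborFinset u := by
        rw [hSdel, hSboth]
        ext v
        simp only [Finset.mem_union, Finset.mem_filter, Finset.mem_univ, true_and,
          SimpleGraph.mem_neighborFinset]
        tauto
      have h1 : Sdel.card + Sboth.card = G.degree u := by
        rw [← Finset.card_union_of_disjoint hdisj3, hun,
          SimpleGraph.card_neighborFinset_eq_degree]
      exact_mod_cast congrArg (fun n : ℕ => (n : ℝ)) h1
    have hbound3 : ∑ v ∈ Sboth, |(normLap Gp - normLap G) u v|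
        ≤ α / (1 - α) * (((G.degree u : ℝ) - (Sdel.card : ℝ)) / sq1) := by
      have hstep : ∀ v ∈ Sboth, |(normLap Gp - normLap G) u v| ≤ α / (1 - α) * (1 / sq1) := by
        intro v hv
        rw [hSboth, Finset.mem_filter] at hv
        exact hkey v hv.2.1 hv.2.2
      calc ∑ v ∈ Sboth, |(normLap Gp - normLap G) u v|
          ≤ Sboth.card • (α / (1 - α) * (1 / sq1)) := Finset.sum_le_card_nsmul _ _ _ hstep
        _ = α / (1 - α) * (((G.degree u : ℝ) - (Sdel.card : ℝ)) / sq1) := by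
            rw [nsmul_eq_mul, ← hcard]
            ring
    rw [hsplit]
    exact add_le_add (add_le_add hbound1 hbound2) hbound3
  have hrow' : ∀ u, ∑ v, |(normLap Gp - normLap G) u v| ≤
      Finset.univ.sup' Finset.univ_nonempty (fun u =>
        ((Finset.univ.filter (fun v => G.Adj u v ∧ ¬ Gp.Adj u v)).card : ℝ) /
            Real.sqrt ((G.degree u : ℝ) *
              (G.neighborFinset u).inf' (hG u) (fun v => (G.degree v : ℝ))) +
        ((Finset.univ.filter (fun v => Gp.Adj u v ∧ ¬ G.Adj u v)).card : ℝ) /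
            Real.sqrt ((Gp.degree u : ℝ) *
              (Gp.neighborFinset u).inf' (hGp u) (fun v => (Gp.degree v : ℝ))) +
        (alphaU G Gp u / (1 - alphaU G Gp u)) *
          (((G.degree u : ℝ) -
              ((Finset.univ.filter (fun v => G.Adj u v ∧ ¬ Gp.Adj u v)).card : ℝ)) /
            Real.sqrt ((G.degree u : ℝ) *
              (G.neighborFinset u).inf' (hG u) (fun v => (G.degree v : ℝ))))) := by
    intro u
    refine (hrow u).trans ?_
    exact Finset.le_sup' (fun u =>
        ((Finset.univ.filter (fun v => G.Adj u v ∧ ¬ Gp.Adj u v)).card : ℝ) /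
            Real.sqrt ((G.degree u : ℝ) *
              (G.neighborFinset u).inf' (hG u) (fun v => (G.degree v : ℝ))) +
        ((Finset.univ.filter (fun v => Gp.Adj u v ∧ ¬ G.Adj u v)).card : ℝ) /
            Real.sqrt ((Gp.degree u : ℝ) *
              (Gp.neighborFinset u).inf' (hGp u) (fun v => (Gp.degree v : ℝ))) +
        (alphaU G Gp u / (1 - alphaU G Gp u)) *
          (((G.degree u : ℝ) -
              ((Finset.univ.filter (fun v => G.Adj u v ∧ ¬ Gp.Adj u v)).card : ℝ)) /
            Real.sqrt ((G.degree u : ℝ) *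
              (G.neighborFinset u).inf' (hG u) (fun v => (G.degree v : ℝ)))))
      (Finset.mem_univ u)
  refine l2_opNorm_le_of_rowsum _ hsym ?_ hrow'
  obtain ⟨u0⟩ := (inferInstance : Nonempty V)
  exact le_trans (Finset.sum_nonneg fun v _ => abs_nonneg _) (hrow' u0)
end

section
/- Let G and G_p be simple graphs on a common finite vertex set, neither having isolated vertices, with normalized Laplacians L and L_p and error matrix E = L_p − L. Suppose the perturbation preserves all degrees, i.e. d_u' = d_u for every vertex u (so that α_u = 0 and Δ_u⁻ = Δ_u⁺ for every u); write r_u = Δ_u⁻ = Δ_u⁺ for the number of rewiring operations around u, and let δ̂_u be the smallest degree among the vertices adjacent to u in G or in G_p. Then ‖E‖₂ ≤ max_{u ∈ V} 2 r_u/√(d_u δ̂_u). -/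
open scoped Matrix.Norms.L2Operator


lemma l2_opNorm_le_of_row_col {n : Type*} [Fintype n] [DecidableEq n]
    (A : Matrix n n ℝ) (c : ℝ) (hc : 0 ≤ c)
    (hrow : ∀ i, ∑ j, |A i j| ≤ c) (hcol : ∀ j, ∑ i, |A i j| ≤ c) : ‖A‖ ≤ c := by
  rw [Matrix.l2_opNorm_def]
  refine ContinuousLinearMap.opNorm_le_bound _ hc fun x => ?_
  set y : n → ℝ := (WithLp.equiv 2 (n → ℝ)) x with hy
  have hAx : ∀ i, ((Matrix.toEuclideanLin A).toContinuousLinearMap x : EuclideanSpace ℝ n) i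
      = A.mulVec y i := fun i => rfl
  have key : ∀ i, (A.mulVec y i) ^ 2 ≤ c * ∑ j, |A i j| * (y j) ^ 2 := by
    intro i
    have h1 : |A.mulVec y i| ≤ ∑ j, Real.sqrt |A i j| * (Real.sqrt |A i j| * |y j|) := by
      have : A.mulVec y i = ∑ j, A i j * y j := rfl
      rw [this]
      refine (Finset.abs_sum_le_sum_abs _ _).trans (le_of_eq (Finset.sum_congr rfl fun j _ => ?_))
      rw [abs_mul, ← mul_assoc, Real.mul_self_sqrt (abs_nonneg _)]
    have h2 : (A.mulVec y i) ^ 2 ≤ (∑ j, Real.sqrt |A i j| * (Real.sqrt |A i j| * |y j|)) ^ 2 := by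
      rw [← sq_abs]
      exact pow_le_pow_left₀ (abs_nonneg _) h1 2
    refine h2.trans ?_
    have h3 := Finset.sum_mul_sq_le_sq_mul_sq Finset.univ
      (fun j => Real.sqrt |A i j|) (fun j => Real.sqrt |A i j| * |y j|)
    refine h3.trans ?_
    have e1 : ∑ j, (Real.sqrt |A i j|) ^ 2 = ∑ j, |A i j| :=
      Finset.sum_congr rfl fun j _ => Real.sq_sqrt (abs_nonneg _)
    have e2 : ∀ j, (Real.sqrt |A i j| * |y j|) ^ 2 = |A i j| * (y j) ^ 2 := by
      intro j
      rw [mul_pow, Real.sq_sqrt (abs_nonneg _), sq_abs]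
    rw [e1]
    simp_rw [e2]
    exact mul_le_mul_of_nonneg_right (hrow i)
      (Finset.sum_nonneg fun j _ => mul_nonneg (abs_nonneg _) (sq_nonneg _))
  have hsum : ∑ i, (A.mulVec y i) ^ 2 ≤ (c * ‖x‖) ^ 2 := by
    calc ∑ i, (A.mulVec y i) ^ 2 ≤ ∑ i, c * ∑ j, |A i j| * (y j) ^ 2 :=
          Finset.sum_le_sum fun i _ => key i
      _ = c * ∑ j, (∑ i, |A i j|) * (y j) ^ 2 := by
          rw [← Finset.mul_sum, Finset.sum_comm]
          simp_rw [Finset.sum_mul]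
      _ ≤ c * ∑ j, c * (y j) ^ 2 := by
          refine mul_le_mul_of_nonneg_left (Finset.sum_le_sum fun j _ => ?_) hc
          exact mul_le_mul_of_nonneg_right (hcol j) (sq_nonneg _)
      _ = (c * ‖x‖) ^ 2 := by
          rw [← Finset.mul_sum, ← mul_assoc, mul_pow, EuclideanSpace.norm_eq,
            Real.sq_sqrt (Finset.sum_nonneg fun j _ => sq_nonneg _), ← pow_two c]
          congr 1
          exact Finset.sum_congr rfl fun j _ => by
            rw [Real.norm_eq_abs, sq_abs]; rfl
  have hn : ‖(Matrix.toEuclideanLin A).toContinuousLinearMap x‖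
      = Real.sqrt (∑ i, (A.mulVec y i) ^ 2) := by
    rw [EuclideanSpace.norm_eq]
    congr 1
    refine Finset.sum_congr rfl fun i _ => ?_
    rw [hAx i, Real.norm_eq_abs, sq_abs]
  rw [LinearEquiv.trans_apply] at *
  rw [hn]
  calc Real.sqrt (∑ i, (A.mulVec y i) ^ 2) ≤ Real.sqrt ((c * ‖x‖) ^ 2) :=
        Real.sqrt_le_sqrt hsum
    _ = c * ‖x‖ := Real.sqrt_sq (mul_nonneg hc (norm_nonneg _))

/-- **Corollary (degree-preserving edge rewiring)**: if the perturbation preserves all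
degrees (`d_u' = d_u` for every `u`), then `‖E‖₂ ≤ max_u 2 r_u / √(d_u δ̂_u)`, where
`r_u = Δ_u⁻ = Δ_u⁺` is the number of rewiring operations around `u` and `δ̂_u` is the
smallest degree among the vertices adjacent to `u` in `G` or in `G_p`. -/
theorem error_matrix_l2_opNorm_bound_of_rewiring {V : Type*} [Fintype V] [DecidableEq V]
    [Nonempty V]
    (G Gp : SimpleGraph V) [DecidableRel G.Adj] [DecidableRel Gp.Adj]
    (hG : ∀ v, (G.neighborFinset v).Nonempty)
    (hGp : ∀ v, (Gp.neighborFinset v).Nonempty)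
    (hdeg : ∀ v, Gp.degree v = G.degree v) :
    ‖normLap Gp - normLap G‖ ≤
      Finset.univ.sup' Finset.univ_nonempty (fun u =>
        2 * ((Finset.univ.filter (fun v => G.Adj u v ∧ ¬ Gp.Adj u v)).card : ℝ) /
          Real.sqrt ((G.degree u : ℝ) *
            ((G.neighborFinset u ∪ Gp.neighborFinset u).inf'
              ((hG u).mono Finset.subset_union_left)
              (fun v => (G.degree v : ℝ))))) := by
  set d : V → ℝ := fun u => (G.degree u : ℝ) with hd
  set δ : V → ℝ := fun u => (G.neighborFinset u ∪ Gp.neighborFinset u).inf'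
      ((hG u).mono Finset.subset_union_left) (fun v => (G.degree v : ℝ)) with hδ
  set f : V → ℝ := fun u =>
      2 * ((Finset.univ.filter (fun v => G.Adj u v ∧ ¬ Gp.Adj u v)).card : ℝ) /
        Real.sqrt (d u * δ u) with hf
  have hdpos : ∀ u, 0 < d u := by
    intro u
    simpa [hd] using (Nat.cast_pos (α := ℝ)).mpr (Finset.card_pos.mpr (hG u))
  have hδpos : ∀ u, 0 < δ u := by
    intro u
    rw [hδ, Finset.lt_inf'_iff]
    intro v _
    simpa using (Nat.cast_pos (α := ℝ)).mpr (Finset.card_pos.mpr (hG v))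
  have hfnonneg : ∀ u, 0 ≤ f u := fun u =>
    div_nonneg (by positivity) (Real.sqrt_nonneg _)
  have habs : ∀ u v, |(normLap Gp - normLap G) u v| =
      if (G.Adj u v ∧ ¬Gp.Adj u v) ∨ (Gp.Adj u v ∧ ¬G.Adj u v)
      then 1 / Real.sqrt (d u * d v) else 0 := by
    intro u v
    have hsq : (0:ℝ) ≤ 1 / Real.sqrt (d u * d v) :=
      div_nonneg one_pos.le (Real.sqrt_nonneg _)
    simp only [Matrix.sub_apply, normLap, hdeg, hd]
    by_cases huv : u = v
    · subst huv; simp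
    · by_cases h1 : G.Adj u v <;> by_cases h2 : Gp.Adj u v <;>
        simp [huv, h1, h2, abs_of_nonneg hsq, hd] <;>
        rw [abs_of_nonneg (Real.sqrt_nonneg _), abs_of_nonneg (Real.sqrt_nonneg _)]
  -- cardinality of the symmetric difference
  have hcard : ∀ u, ((Finset.univ.filter (fun v => (G.Adj u v ∧ ¬Gp.Adj u v) ∨
        (Gp.Adj u v ∧ ¬G.Adj u v))).card : ℝ) =
      2 * ((Finset.univ.filter (fun v => G.Adj u v ∧ ¬ Gp.Adj u v)).card : ℝ) := by
    intro u
    have hAB : (Finset.univ.filter (fun v => (G.Adj u v ∧ ¬Gp.Adj u v) ∨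
          (Gp.Adj u v ∧ ¬G.Adj u v))) =
        (Finset.univ.filter (fun v => G.Adj u v ∧ ¬Gp.Adj u v)) ∪
        (Finset.univ.filter (fun v => Gp.Adj u v ∧ ¬G.Adj u v)) := by
      rw [← Finset.filter_or]
    have hdisj : Disjoint (Finset.univ.filter (fun v => G.Adj u v ∧ ¬Gp.Adj u v))
        (Finset.univ.filter (fun v => Gp.Adj u v ∧ ¬G.Adj u v)) := by
      rw [Finset.disjoint_filter]
      tauto
    have h1 := Finset.card_filter_add_card_filter_not
      (s := G.neighborFinset u) (p := fun v => Gp.Adj u v)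
    have h2 := Finset.card_filter_add_card_filter_not
      (s := Gp.neighborFinset u) (p := fun v => G.Adj u v)
    simp only [SimpleGraph.neighborFinset_eq_filter, Finset.filter_filter] at h1 h2
    have hdG : (Finset.univ.filter (fun w => G.Adj u w)).card = G.degree u := by
      rw [← SimpleGraph.neighborFinset_eq_filter]; rfl
    have hdGp : (Finset.univ.filter (fun w => Gp.Adj u w)).card = Gp.degree u := by
      rw [← SimpleGraph.neighborFinset_eq_filter]; rfl
    have hC : (Finset.univ.filter (fun a => G.Adj u a ∧ Gp.Adj u a)).card =
        (Finset.univ.filter (fun a => Gp.Adj u a ∧ G.Adj u a)).card := by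
      congr 1
      apply Finset.filter_congr
      intro x _
      exact and_comm
    have hBA : (Finset.univ.filter (fun v => Gp.Adj u v ∧ ¬G.Adj u v)).card =
        (Finset.univ.filter (fun v => G.Adj u v ∧ ¬Gp.Adj u v)).card := by
      rw [hdG] at h1; rw [hdGp, hdeg u] at h2
      omega
    rw [hAB, Finset.card_union_of_disjoint hdisj, hBA]
    push_cast
    ring
  have hrowb : ∀ u, ∑ v, |(normLap Gp - normLap G) u v| ≤ f u := by
    intro u
    have hbound : ∀ v, |(normLap Gp - normLap G) u v| ≤
        if (G.Adj u v ∧ ¬Gp.Adj u v) ∨ (Gp.Adj u v ∧ ¬G.Adj u v)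
        then 1 / Real.sqrt (d u * δ u) else 0 := by
      intro v
      rw [habs u v]
      split_ifs with h
      · have hv : v ∈ G.neighborFinset u ∪ Gp.neighborFinset u := by
          rcases h with ⟨h, -⟩ | ⟨h, -⟩
          · exact Finset.mem_union_left _ (by rwa [SimpleGraph.mem_neighborFinset])
          · exact Finset.mem_union_right _ (by rwa [SimpleGraph.mem_neighborFinset])
        have hδle : δ u ≤ d v := Finset.inf'_le _ hv
        have hs : Real.sqrt (d u * δ u) ≤ Real.sqrt (d u * d v) :=
          Real.sqrt_le_sqrt (mul_le_mul_of_nonneg_left hδle (hdpos u).le)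
        exact one_div_le_one_div_of_le (Real.sqrt_pos.mpr (mul_pos (hdpos u) (hδpos u))) hs
      · exact le_refl 0
    calc ∑ v, |(normLap Gp - normLap G) u v|
        ≤ ∑ v, (if (G.Adj u v ∧ ¬Gp.Adj u v) ∨ (Gp.Adj u v ∧ ¬G.Adj u v)
            then 1 / Real.sqrt (d u * δ u) else 0) :=
          Finset.sum_le_sum fun v _ => hbound v
      _ = ((Finset.univ.filter (fun v => (G.Adj u v ∧ ¬Gp.Adj u v) ∨
            (Gp.Adj u v ∧ ¬G.Adj u v))).card : ℝ) * (1 / Real.sqrt (d u * δ u)) := by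
          rw [Finset.sum_ite, Finset.sum_const, Finset.sum_const_zero, add_zero,
            nsmul_eq_mul]
      _ = f u := by
          rw [hcard u, hf, mul_one_div]
  have hsym : ∀ u v, |(normLap Gp - normLap G) u v| = |(normLap Gp - normLap G) v u| := by
    intro u v
    rw [habs u v, habs v u, mul_comm (d u)]
    have hiff : ((G.Adj u v ∧ ¬Gp.Adj u v) ∨ (Gp.Adj u v ∧ ¬G.Adj u v)) ↔
        ((G.Adj v u ∧ ¬Gp.Adj v u) ∨ (Gp.Adj v u ∧ ¬G.Adj v u)) := by
      constructor <;> rintro (⟨a, b⟩ | ⟨a, b⟩)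
      · exact Or.inl ⟨a.symm, fun hh => b hh.symm⟩
      · exact Or.inr ⟨a.symm, fun hh => b hh.symm⟩
      · exact Or.inl ⟨a.symm, fun hh => b hh.symm⟩
      · exact Or.inr ⟨a.symm, fun hh => b hh.symm⟩
    rw [if_congr hiff rfl rfl]
  obtain ⟨u0⟩ := (inferInstance : Nonempty V)
  refine l2_opNorm_le_of_row_col _ _ ?_ ?_ ?_
  · exact le_trans (hfnonneg u0) (Finset.le_sup' f (Finset.mem_univ u0))
  · exact fun i => (hrowb i).trans (Finset.le_sup' f (Finset.mem_univ i))
  · intro j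
    have : ∑ i, |(normLap Gp - normLap G) i j| = ∑ i, |(normLap Gp - normLap G) j i| :=
      Finset.sum_congr rfl fun i _ => hsym i j
    rw [this]
    exact (hrowb j).trans (Finset.le_sup' f (Finset.mem_univ j))
end

section
/- Let G and G_p be simple graphs on a common finite vertex set, neither having isolated vertices, with normalized Laplacians L and L_p. Let α > 0 and assume α_u ∈ [0,1) for every vertex u. Then for every nonzero real vector x, ‖(I + αL)^{-1} x − (I + αL_p)^{-1} x‖₂ / ‖x‖₂ ≤ α · max_{u ∈ V} { Δ_u⁻/√(d_u δ_u) + Δ_u⁺/√(d_u' δ_u') + (α_u/(1−α_u)) · (d_u − Δ_u⁻)/√(d_u δ_u) }. -/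
open scoped Matrix

/-- The Euclidean (ℓ2) norm of a vector indexed by `V`. -/
noncomputable def l2norm {V : Type*} [Fintype V] (x : V → ℝ) : ℝ :=
  Real.sqrt (∑ v, x v ^ 2)

set_option linter.unusedSectionVars false


lemma key_frac {du dv du' dv' a : ℝ} (hdu : 0 < du) (hdv : 0 < dv)
    (hdu' : 0 < du') (hdv' : 0 < dv')
    (ha0 : 0 ≤ a) (ha1 : a < 1) (h1 : |du' - du| ≤ a * du) (h2 : |dv' - dv| ≤ a * dv) :
    |(-(1 / Real.sqrt (du' * dv'))) - (-(1 / Real.sqrt (du * dv)))| ≤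
      a / (1 - a) * (1 / Real.sqrt (du * dv)) := by
  set s := Real.sqrt (du * dv) with hs
  set t := Real.sqrt (du' * dv') with ht
  have hspos : 0 < s := Real.sqrt_pos.2 (by positivity)
  have htpos : 0 < t := Real.sqrt_pos.2 (by positivity)
  have h1' := abs_le.1 h1
  have h2' := abs_le.1 h2
  have h1a : 1 - a > 0 := by linarith
  have hlow : (1 - a) * s ≤ t := by
    have : ((1 - a) * s) ^ 2 ≤ t ^ 2 := by
      rw [mul_pow, hs, ht, Real.sq_sqrt (by positivity), Real.sq_sqrt (by positivity)]
      have hu : (1 - a) * du ≤ du' := by linarith [h1'.1]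
      have hv : (1 - a) * dv ≤ dv' := by linarith [h2'.1]
      calc (1 - a) ^ 2 * (du * dv) = ((1 - a) * du) * ((1 - a) * dv) := by ring
        _ ≤ du' * dv' := mul_le_mul hu hv (by positivity) hdu'.le
    exact (pow_le_pow_iff_left₀ (by positivity) htpos.le (by norm_num)).1 this
  have hhigh : t ≤ (1 + a) * s := by
    have : t ^ 2 ≤ ((1 + a) * s) ^ 2 := by
      rw [mul_pow, hs, ht, Real.sq_sqrt (by positivity), Real.sq_sqrt (by positivity)]
      have hu : du' ≤ (1 + a) * du := by linarith [h1'.2]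
      have hv : dv' ≤ (1 + a) * dv := by linarith [h2'.2]
      calc du' * dv' ≤ ((1 + a) * du) * ((1 + a) * dv) :=
            mul_le_mul hu hv hdv'.le (by positivity)
        _ = (1 + a) ^ 2 * (du * dv) := by ring
    exact (pow_le_pow_iff_left₀ htpos.le (by positivity) (by norm_num)).1 this
  have habs : |t - s| ≤ a * s := by
    rw [abs_le]; constructor <;> nlinarith
  have heq : (-(1 / t)) - (-(1 / s)) = (t - s) / (s * t) := by
    field_simp; ring
  rw [heq, abs_div, abs_of_pos (mul_pos hspos htpos)]
  have hden : (1 - a) * s * s ≤ s * t := by nlinarith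
  calc |t - s| / (s * t) ≤ (a * s) / ((1 - a) * s * s) :=
        div_le_div₀ (by positivity) habs (by positivity) hden
    _ = a / (1 - a) * (1 / s) := by field_simp

section
variable {V : Type*} [Fintype V] [DecidableEq V]
variable (G : SimpleGraph V) [DecidableRel G.Adj]

lemma normLap_symm (u v : V) : normLap G u v = normLap G v u := by
  unfold normLap
  by_cases h : u = v
  · subst h; simp
  · rw [if_neg h, if_neg (Ne.symm h)]
    by_cases hadj : G.Adj u v
    · rw [if_pos hadj, if_pos hadj.symm, mul_comm]
    · rw [if_neg hadj, if_neg (fun h' => hadj h'.symm)]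

lemma degree_pos (hG : ∀ v, (G.neighborFinset v).Nonempty) (v : V) :
    (0 : ℝ) < (G.degree v : ℝ) := by
  have : 0 < G.degree v := Finset.card_pos.2 (hG v)
  exact_mod_cast this

lemma normLap_eq_conj (hG : ∀ v, (G.neighborFinset v).Nonempty) :
    normLap G = Matrix.diagonal (fun v => (Real.sqrt (G.degree v))⁻¹) * G.lapMatrix ℝ *
      Matrix.diagonal (fun v => (Real.sqrt (G.degree v))⁻¹) := by
  ext u v
  have hdeg : ∀ w, (0:ℝ) < Real.sqrt (G.degree w) :=
    fun w => Real.sqrt_pos.2 (degree_pos G hG w)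
  rw [Matrix.mul_diagonal, Matrix.diagonal_mul]
  unfold normLap SimpleGraph.lapMatrix SimpleGraph.degMatrix
  by_cases h : u = v
  · subst h
    simp only [if_pos rfl, Matrix.sub_apply, Matrix.diagonal_apply_eq,
      SimpleGraph.adjMatrix_apply, if_neg (G.irrefl (v := u))]
    rw [sub_zero, eq_comm, mul_comm, ← mul_assoc, ← mul_inv,
      Real.mul_self_sqrt (degree_pos G hG u).le]
    simp [inv_mul_cancel₀ (degree_pos G hG u).ne']
  · rw [if_neg h]
    simp only [Matrix.sub_apply, Matrix.diagonal_apply_ne _ h, SimpleGraph.adjMatrix_apply]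
    by_cases hadj : G.Adj u v
    · rw [if_pos hadj, if_pos hadj]
      rw [Real.sqrt_mul (Nat.cast_nonneg _)]
      rw [zero_sub, one_div, mul_inv]
      ring
    · rw [if_neg hadj, if_neg hadj]
      ring

lemma normLap_posSemidef (hG : ∀ v, (G.neighborFinset v).Nonempty) :
    (normLap G).PosSemidef := by
  rw [normLap_eq_conj G hG]
  have h := (SimpleGraph.posSemidef_lapMatrix ℝ G).mul_mul_conjTranspose_same
    (Matrix.diagonal (fun v => (Real.sqrt (G.degree v))⁻¹))
  rw [Matrix.diagonal_conjTranspose] at h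
  simpa using h


end

section
variable {V : Type*} [Fintype V] [DecidableEq V]

lemma l2norm_nonneg (x : V → ℝ) : 0 ≤ l2norm x := Real.sqrt_nonneg _

lemma l2norm_pos {x : V → ℝ} (hx : x ≠ 0) : 0 < l2norm x := by
  apply Real.sqrt_pos.2
  obtain ⟨v, hv⟩ : ∃ v, x v ≠ 0 := by
    by_contra h; push_neg at h; exact hx (funext h)
  exact Finset.sum_pos' (fun i _ => sq_nonneg _) ⟨v, Finset.mem_univ v, by positivity⟩

lemma l2norm_smul {a : ℝ} (ha : 0 ≤ a) (x : V → ℝ) : l2norm (a • x) = a * l2norm x := by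
  unfold l2norm
  simp_rw [Pi.smul_apply, smul_eq_mul, mul_pow]
  rw [← Finset.mul_sum, Real.sqrt_mul (by positivity), Real.sqrt_sq ha]

lemma contraction {A : Matrix V V ℝ} (hdet : IsUnit A.det)
    (h1 : ∀ y : V → ℝ, (∑ v, y v ^ 2) ≤ y ⬝ᵥ (A *ᵥ y)) (x : V → ℝ) :
    l2norm (A⁻¹ *ᵥ x) ≤ l2norm x := by
  set y := A⁻¹ *ᵥ x with hy
  have hAy : A *ᵥ y = x := by
    rw [hy, Matrix.mulVec_mulVec, Matrix.mul_nonsing_inv _ hdet, Matrix.one_mulVec]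
  have h2 : (∑ v, y v ^ 2) ≤ ∑ v, y v * x v := by
    simpa [dotProduct, hAy] using h1 y
  have h3 : ∑ v, y v * x v ≤ Real.sqrt (∑ v, y v ^ 2) * Real.sqrt (∑ v, x v ^ 2) :=
    Real.sum_mul_le_sqrt_mul_sqrt _ _ _
  unfold l2norm
  rcases eq_or_lt_of_le (Real.sqrt_nonneg (∑ v, y v ^ 2)) with h0 | h0
  · rw [← h0]; exact Real.sqrt_nonneg _
  · have hS : Real.sqrt (∑ v, y v ^ 2) * Real.sqrt (∑ v, y v ^ 2) = ∑ v, y v ^ 2 :=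
      Real.mul_self_sqrt (by positivity)
    nlinarith [h2.trans h3]

lemma schur {E : Matrix V V ℝ} {M : ℝ} (hM : 0 ≤ M)
    (hrow : ∀ u, ∑ v, |E u v| ≤ M) (hcol : ∀ v, ∑ u, |E u v| ≤ M) (w : V → ℝ) :
    l2norm (E *ᵥ w) ≤ M * l2norm w := by
  have key : ∑ u, (E *ᵥ w) u ^ 2 ≤ M ^ 2 * ∑ v, w v ^ 2 := by
    have step1 : ∀ u, (E *ᵥ w) u ^ 2 ≤ M * ∑ v, |E u v| * w v ^ 2 := by
      intro u
      have habs : (E *ᵥ w) u ^ 2 ≤ (∑ v, |E u v| * |w v|) ^ 2 := by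
        rw [← sq_abs]
        apply pow_le_pow_left₀ (abs_nonneg _)
        calc |(E *ᵥ w) u| = |∑ v, E u v * w v| := by rw [Matrix.mulVec, dotProduct]
          _ ≤ ∑ v, |E u v * w v| := Finset.abs_sum_le_sum_abs _ _
          _ = ∑ v, |E u v| * |w v| := by simp [abs_mul]
      have hcs : (∑ v, |E u v| * |w v|) ^ 2 ≤ (∑ v, |E u v|) * ∑ v, |E u v| * w v ^ 2 := by
        have := Finset.sum_mul_sq_le_sq_mul_sq Finset.univ
          (fun v => Real.sqrt |E u v|) (fun v => Real.sqrt |E u v| * |w v|)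
        calc (∑ v, |E u v| * |w v|) ^ 2
            = (∑ v, (Real.sqrt |E u v|) * (Real.sqrt |E u v| * |w v|)) ^ 2 := by
              congr 1; apply Finset.sum_congr rfl; intro v _
              rw [← mul_assoc, Real.mul_self_sqrt (abs_nonneg _)]
          _ ≤ (∑ v, Real.sqrt |E u v| ^ 2) * ∑ v, (Real.sqrt |E u v| * |w v|) ^ 2 := this
          _ = (∑ v, |E u v|) * ∑ v, |E u v| * w v ^ 2 := by
              congr 1
              · apply Finset.sum_congr rfl; intro v _; exact Real.sq_sqrt (abs_nonneg _)
              · apply Finset.sum_congr rfl; intro v _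
                rw [mul_pow, Real.sq_sqrt (abs_nonneg _), sq_abs]
      have hsum_nonneg : 0 ≤ ∑ v, |E u v| * w v ^ 2 :=
        Finset.sum_nonneg fun v _ => mul_nonneg (abs_nonneg _) (sq_nonneg _)
      calc (E *ᵥ w) u ^ 2 ≤ (∑ v, |E u v|) * ∑ v, |E u v| * w v ^ 2 := habs.trans hcs
        _ ≤ M * ∑ v, |E u v| * w v ^ 2 := by
            apply mul_le_mul_of_nonneg_right (hrow u) hsum_nonneg
    calc ∑ u, (E *ᵥ w) u ^ 2 ≤ ∑ u, M * ∑ v, |E u v| * w v ^ 2 :=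
          Finset.sum_le_sum fun u _ => step1 u
      _ = M * ∑ v, (∑ u, |E u v|) * w v ^ 2 := by
          rw [← Finset.mul_sum, Finset.sum_comm]
          congr 1; apply Finset.sum_congr rfl; intro v _; rw [Finset.sum_mul]
      _ ≤ M * ∑ v, M * w v ^ 2 := by
          apply mul_le_mul_of_nonneg_left _ hM
          exact Finset.sum_le_sum fun v _ =>
            mul_le_mul_of_nonneg_right (hcol v) (sq_nonneg _)
      _ = M ^ 2 * ∑ v, w v ^ 2 := by rw [← Finset.mul_sum]; ring
  unfold l2norm
  calc Real.sqrt (∑ u, (E *ᵥ w) u ^ 2) ≤ Real.sqrt (M ^ 2 * ∑ v, w v ^ 2) :=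
        Real.sqrt_le_sqrt key
    _ = M * Real.sqrt (∑ v, w v ^ 2) := by
        rw [Real.sqrt_mul (sq_nonneg _), Real.sqrt_sq hM]

end

lemma rowsum_bound {V : Type*} [Fintype V] [DecidableEq V]
    (G Gp : SimpleGraph V) [DecidableRel G.Adj] [DecidableRel Gp.Adj]
    (hG : ∀ v, (G.neighborFinset v).Nonempty)
    (hGp : ∀ v, (Gp.neighborFinset v).Nonempty)
    (hα : ∀ u, alphaU G Gp u ∈ Set.Ico (0 : ℝ) 1) (u : V) :
    ∑ v, |(normLap Gp - normLap G) u v| ≤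
      ((Finset.univ.filter (fun v => G.Adj u v ∧ ¬ Gp.Adj u v)).card : ℝ) /
          Real.sqrt ((G.degree u : ℝ) *
            (G.neighborFinset u).inf' (hG u) (fun v => (G.degree v : ℝ))) +
      ((Finset.univ.filter (fun v => Gp.Adj u v ∧ ¬ G.Adj u v)).card : ℝ) /
          Real.sqrt ((Gp.degree u : ℝ) *
            (Gp.neighborFinset u).inf' (hGp u) (fun v => (Gp.degree v : ℝ))) +
      (alphaU G Gp u / (1 - alphaU G Gp u)) *
        (((G.degree u : ℝ) -
            ((Finset.univ.filter (fun v => G.Adj u v ∧ ¬ Gp.Adj u v)).card : ℝ)) /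
          Real.sqrt ((G.degree u : ℝ) *
            (G.neighborFinset u).inf' (hG u) (fun v => (G.degree v : ℝ)))) := by
  classical
  set a := alphaU G Gp u with ha
  set δ : ℝ := (G.neighborFinset u).inf' (hG u) (fun v => (G.degree v : ℝ)) with hδdef
  set δ' : ℝ := (Gp.neighborFinset u).inf' (hGp u) (fun v => (Gp.degree v : ℝ)) with hδ'def
  set Del := Finset.univ.filter (fun v => G.Adj u v ∧ ¬ Gp.Adj u v) with hDel
  set Ad := Finset.univ.filter (fun v => Gp.Adj u v ∧ ¬ G.Adj u v) with hAd
  set Com := Finset.univ.filter (fun v => G.Adj u v ∧ Gp.Adj u v) with hCom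
  have ha0 : 0 ≤ a := (hα u).1
  have ha1 : a < 1 := (hα u).2
  have dpos : ∀ v, (0:ℝ) < (G.degree v : ℝ) := degree_pos G hG
  have dpos' : ∀ v, (0:ℝ) < (Gp.degree v : ℝ) := degree_pos Gp hGp
  have hδpos : 0 < δ := by
    rw [hδdef, Finset.lt_inf'_iff]
    exact fun v _ => dpos v
  have hδ'pos : 0 < δ' := by
    rw [hδ'def, Finset.lt_inf'_iff]
    exact fun v _ => dpos' v
  have hδle : ∀ v, G.Adj u v → δ ≤ (G.degree v : ℝ) := fun v hv =>
    Finset.inf'_le _ ((G.mem_neighborFinset u v).2 hv)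
  have hδ'le : ∀ v, Gp.Adj u v → δ' ≤ (Gp.degree v : ℝ) := fun v hv =>
    Finset.inf'_le _ ((Gp.mem_neighborFinset u v).2 hv)
  have haw : ∀ w ∈ insert u (G.neighborFinset u),
      |(Gp.degree w : ℝ) - (G.degree w : ℝ)| ≤ a * (G.degree w : ℝ) := by
    intro w hw
    have h := Finset.le_sup'
      (f := fun v => |(Gp.degree v : ℝ) - (G.degree v : ℝ)| / (G.degree v : ℝ)) hw
    have h2 : |(Gp.degree w : ℝ) - (G.degree w : ℝ)| / (G.degree w : ℝ) ≤ a := by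
      rw [ha, alphaU]; exact h
    rw [div_le_iff₀ (dpos w)] at h2
    linarith [h2]
  set c1 : ℝ := 1 / Real.sqrt ((G.degree u : ℝ) * δ) with hc1def
  set c2 : ℝ := 1 / Real.sqrt ((Gp.degree u : ℝ) * δ') with hc2def
  set c3 : ℝ := a / (1 - a) * c1 with hc3def
  have hs1pos : 0 < Real.sqrt ((G.degree u : ℝ) * δ) := Real.sqrt_pos.2 (mul_pos (dpos u) hδpos)
  have hs2pos : 0 < Real.sqrt ((Gp.degree u : ℝ) * δ') := Real.sqrt_pos.2 (mul_pos (dpos' u) hδ'pos)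
  have hc1pos : 0 < c1 := one_div_pos.2 hs1pos
  have hc2pos : 0 < c2 := one_div_pos.2 hs2pos
  have hc3nn : 0 ≤ c3 := by
    rw [hc3def]
    have : (0:ℝ) < 1 - a := by linarith
    positivity
  -- bound 1/sqrt(du*dv) ≤ c1 for neighbours v
  have hb1 : ∀ v, G.Adj u v →
      1 / Real.sqrt ((G.degree u : ℝ) * (G.degree v : ℝ)) ≤ c1 := by
    intro v hv
    rw [hc1def]
    apply one_div_le_one_div_of_le hs1pos
    apply Real.sqrt_le_sqrt
    exact mul_le_mul_of_nonneg_left (hδle v hv) (dpos u).le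
  have hb2 : ∀ v, Gp.Adj u v →
      1 / Real.sqrt ((Gp.degree u : ℝ) * (Gp.degree v : ℝ)) ≤ c2 := by
    intro v hv
    rw [hc2def]
    apply one_div_le_one_div_of_le hs2pos
    apply Real.sqrt_le_sqrt
    exact mul_le_mul_of_nonneg_left (hδ'le v hv) (dpos' u).le
  have pointwise : ∀ v, |(normLap Gp - normLap G) u v| ≤
      (if v ∈ Del then c1 else 0) + (if v ∈ Ad then c2 else 0) +
        (if v ∈ Com then c3 else 0) := by
    intro v
    have hmemDel : v ∈ Del ↔ (G.Adj u v ∧ ¬ Gp.Adj u v) := by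
      rw [hDel]; simp
    have hmemAd : v ∈ Ad ↔ (Gp.Adj u v ∧ ¬ G.Adj u v) := by
      rw [hAd]; simp
    have hmemCom : v ∈ Com ↔ (G.Adj u v ∧ Gp.Adj u v) := by
      rw [hCom]; simp
    by_cases huv : u = v
    · subst huv
      have h1 : ¬ G.Adj u u := G.irrefl
      have h2 : ¬ Gp.Adj u u := Gp.irrefl
      rw [if_neg (fun h => h1 (hmemDel.1 h).1), if_neg (fun h => h2 (hmemAd.1 h).1),
        if_neg (fun h => h1 (hmemCom.1 h).1)]
      simp [Matrix.sub_apply, normLap]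
    by_cases hg : G.Adj u v <;> by_cases hp : Gp.Adj u v
    · -- common edge
      rw [if_neg (fun h => (hmemDel.1 h).2 hp), if_neg (fun h => (hmemAd.1 h).2 hg),
        if_pos (hmemCom.2 ⟨hg, hp⟩), zero_add, zero_add]
      have hE : (normLap Gp - normLap G) u v =
          (-(1 / Real.sqrt ((Gp.degree u : ℝ) * (Gp.degree v : ℝ)))) -
          (-(1 / Real.sqrt ((G.degree u : ℝ) * (G.degree v : ℝ)))) := by
        simp [Matrix.sub_apply, normLap, huv, hg, hp]
      rw [hE]
      have hvmem : v ∈ insert u (G.neighborFinset u) :=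
        Finset.mem_insert_of_mem ((G.mem_neighborFinset u v).2 hg)
      have humem : u ∈ insert u (G.neighborFinset u) := Finset.mem_insert_self _ _
      have hk := key_frac (dpos u) (dpos v) (dpos' u) (dpos' v) ha0 ha1
        (haw u humem) (haw v hvmem)
      refine hk.trans ?_
      rw [hc3def]
      apply mul_le_mul_of_nonneg_left (hb1 v hg)
      have : (0:ℝ) < 1 - a := by linarith
      positivity
    · -- deleted edge
      rw [if_pos (hmemDel.2 ⟨hg, hp⟩), if_neg (fun h => (hmemAd.1 h).2 hg),
        if_neg (fun h => hp (hmemCom.1 h).2), add_zero, add_zero]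
      have hE : (normLap Gp - normLap G) u v =
          0 - (-(1 / Real.sqrt ((G.degree u : ℝ) * (G.degree v : ℝ)))) := by
        simp [Matrix.sub_apply, normLap, huv, hg, hp]
      rw [hE, zero_sub, neg_neg,
        abs_of_pos (one_div_pos.2 (Real.sqrt_pos.2 (mul_pos (dpos u) (dpos v))))]
      exact hb1 v hg
    · -- added edge
      rw [if_neg (fun h => (hmemDel.1 h).1 |> hg), if_pos (hmemAd.2 ⟨hp, hg⟩),
        if_neg (fun h => (hmemCom.1 h).1 |> hg), zero_add, add_zero]
      have hE : (normLap Gp - normLap G) u v =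
          (-(1 / Real.sqrt ((Gp.degree u : ℝ) * (Gp.degree v : ℝ)))) - 0 := by
        simp [Matrix.sub_apply, normLap, huv, hg, hp]
      rw [hE, sub_zero, abs_neg,
        abs_of_pos (one_div_pos.2 (Real.sqrt_pos.2 (mul_pos (dpos' u) (dpos' v))))]
      exact hb2 v hp
    · rw [if_neg (fun h => (hmemDel.1 h).1 |> hg), if_neg (fun h => (hmemAd.1 h).1 |> hp),
        if_neg (fun h => (hmemCom.1 h).1 |> hg)]
      have hE : (normLap Gp - normLap G) u v = 0 := by
        simp [Matrix.sub_apply, normLap, huv, hg, hp]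
      simp [hE]
  have hsum : ∑ v, ((if v ∈ Del then c1 else 0) + (if v ∈ Ad then c2 else 0) +
      (if v ∈ Com then c3 else 0)) =
      (Del.card : ℝ) * c1 + (Ad.card : ℝ) * c2 + (Com.card : ℝ) * c3 := by
    rw [Finset.sum_add_distrib, Finset.sum_add_distrib]
    congr 1
    · congr 1
      · rw [Finset.sum_ite_mem, Finset.univ_inter, Finset.sum_const, nsmul_eq_mul]
      · rw [Finset.sum_ite_mem, Finset.univ_inter, Finset.sum_const, nsmul_eq_mul]
    · rw [Finset.sum_ite_mem, Finset.univ_inter, Finset.sum_const, nsmul_eq_mul]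
  have hcard : (Del.card : ℝ) + (Com.card : ℝ) = (G.degree u : ℝ) := by
    have hdisj : Disjoint Del Com := by
      rw [Finset.disjoint_left]
      intro v hv hv'
      exact (by simpa [hDel] using hv : G.Adj u v ∧ ¬ Gp.Adj u v).2
        (by simpa [hCom] using hv' : G.Adj u v ∧ Gp.Adj u v).2
    have hunion : Del ∪ Com = G.neighborFinset u := by
      rw [hDel, hCom, ← Finset.filter_or, SimpleGraph.neighborFinset_eq_filter]
      apply Finset.filter_congr
      intro v _
      tauto
    have hc := Finset.card_union_of_disjoint hdisj
    rw [hunion] at hc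
    have hn : Del.card + Com.card = G.degree u := by
      rw [SimpleGraph.degree]; exact hc.symm
    exact_mod_cast hn
  calc ∑ v, |(normLap Gp - normLap G) u v|
      ≤ ∑ v, ((if v ∈ Del then c1 else 0) + (if v ∈ Ad then c2 else 0) +
        (if v ∈ Com then c3 else 0)) := Finset.sum_le_sum fun v _ => pointwise v
    _ = (Del.card : ℝ) * c1 + (Ad.card : ℝ) * c2 + (Com.card : ℝ) * c3 := hsum
    _ = (Del.card : ℝ) / Real.sqrt ((G.degree u : ℝ) * δ) +
        (Ad.card : ℝ) / Real.sqrt ((Gp.degree u : ℝ) * δ') +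
        a / (1 - a) * (((G.degree u : ℝ) - (Del.card : ℝ)) /
          Real.sqrt ((G.degree u : ℝ) * δ)) := by
        have hComv : (Com.card : ℝ) = (G.degree u : ℝ) - (Del.card : ℝ) := by linarith
        rw [hComv, hc3def, hc1def, hc2def]
        ring

section Main
variable {V : Type*} [Fintype V] [DecidableEq V]

lemma quad_lower (G : SimpleGraph V) [DecidableRel G.Adj]
    (hG : ∀ v, (G.neighborFinset v).Nonempty) {α : ℝ} (hαpos : 0 < α) (y : V → ℝ) :
    (∑ v, y v ^ 2) ≤ y ⬝ᵥ ((1 + α • normLap G) *ᵥ y) := by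
  have hpsd := (normLap_posSemidef G hG).dotProduct_mulVec_nonneg y
  rw [Matrix.add_mulVec, Matrix.one_mulVec, Matrix.smul_mulVec,
    dotProduct_add, dotProduct_smul]
  have h1 : y ⬝ᵥ y = ∑ v, y v ^ 2 := by
    rw [dotProduct]; apply Finset.sum_congr rfl; intro v _; ring
  have h2 : 0 ≤ y ⬝ᵥ (normLap G *ᵥ y) := by simpa using hpsd
  rw [h1, smul_eq_mul]
  nlinarith

lemma filter_posdef (G : SimpleGraph V) [DecidableRel G.Adj]
    (hG : ∀ v, (G.neighborFinset v).Nonempty) {α : ℝ} (hαpos : 0 < α) :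
    IsUnit (1 + α • normLap G).det := by
  have hpsd := normLap_posSemidef G hG
  have hsmul : (α • normLap G).PosSemidef := by
    constructor
    · ext i j
      simp only [Matrix.conjTranspose_apply, Matrix.smul_apply, smul_eq_mul, star_trivial]
      rw [normLap_symm G j i]
    · intro x
      exact (hpsd.smul hαpos.le).2 x
  have hpd : (1 + α • normLap G).PosDef := Matrix.PosDef.add_posSemidef Matrix.PosDef.one hsmul
  exact hpd.isUnit.map (Matrix.detMonoidHom)

theorem lowpass_relative_output_distance_bound'
    [Nonempty V]
    (G Gp : SimpleGraph V) [DecidableRel G.Adj] [DecidableRel Gp.Adj]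
    (hG : ∀ v, (G.neighborFinset v).Nonempty)
    (hGp : ∀ v, (Gp.neighborFinset v).Nonempty)
    (α : ℝ) (hαpos : 0 < α)
    (hα : ∀ u, alphaU G Gp u ∈ Set.Ico (0 : ℝ) 1)
    (x : V → ℝ) (hx : x ≠ 0) :
    l2norm ((1 + α • normLap G)⁻¹ *ᵥ x - (1 + α • normLap Gp)⁻¹ *ᵥ x) / l2norm x ≤
      α * Finset.univ.sup' Finset.univ_nonempty (fun u =>
        ((Finset.univ.filter (fun v => G.Adj u v ∧ ¬ Gp.Adj u v)).card : ℝ) /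
            Real.sqrt ((G.degree u : ℝ) *
              (G.neighborFinset u).inf' (hG u) (fun v => (G.degree v : ℝ))) +
        ((Finset.univ.filter (fun v => Gp.Adj u v ∧ ¬ G.Adj u v)).card : ℝ) /
            Real.sqrt ((Gp.degree u : ℝ) *
              (Gp.neighborFinset u).inf' (hGp u) (fun v => (Gp.degree v : ℝ))) +
        (alphaU G Gp u / (1 - alphaU G Gp u)) *
          (((G.degree u : ℝ) -
              ((Finset.univ.filter (fun v => G.Adj u v ∧ ¬ Gp.Adj u v)).card : ℝ)) /
            Real.sqrt ((G.degree u : ℝ) *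
              (G.neighborFinset u).inf' (hG u) (fun v => (G.degree v : ℝ))))) := by
  classical
  set A := 1 + α • normLap G with hA
  set B := 1 + α • normLap Gp with hB
  set E := normLap Gp - normLap G with hE
  set f : V → ℝ := fun u =>
        ((Finset.univ.filter (fun v => G.Adj u v ∧ ¬ Gp.Adj u v)).card : ℝ) /
            Real.sqrt ((G.degree u : ℝ) *
              (G.neighborFinset u).inf' (hG u) (fun v => (G.degree v : ℝ))) +
        ((Finset.univ.filter (fun v => Gp.Adj u v ∧ ¬ G.Adj u v)).card : ℝ) /
            Real.sqrt ((Gp.degree u : ℝ) *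
              (Gp.neighborFinset u).inf' (hGp u) (fun v => (Gp.degree v : ℝ))) +
        (alphaU G Gp u / (1 - alphaU G Gp u)) *
          (((G.degree u : ℝ) -
              ((Finset.univ.filter (fun v => G.Adj u v ∧ ¬ Gp.Adj u v)).card : ℝ)) /
            Real.sqrt ((G.degree u : ℝ) *
              (G.neighborFinset u).inf' (hG u) (fun v => (G.degree v : ℝ)))) with hf
  set M := Finset.univ.sup' Finset.univ_nonempty f with hM
  have hdetA : IsUnit A.det := filter_posdef G hG hαpos
  have hdetB : IsUnit B.det := filter_posdef Gp hGp hαpos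
  have hrow : ∀ u, ∑ v, |E u v| ≤ M := fun u =>
    (rowsum_bound G Gp hG hGp hα u).trans (Finset.le_sup' f (Finset.mem_univ u))
  have hEsymm : ∀ u v, E u v = E v u := by
    intro u v
    rw [hE]
    simp only [Matrix.sub_apply]
    rw [normLap_symm G u v, normLap_symm Gp u v]
  have hcol : ∀ v, ∑ u, |E u v| ≤ M := by
    intro v
    calc ∑ u, |E u v| = ∑ u, |E v u| := by
          apply Finset.sum_congr rfl; intro u _; rw [hEsymm u v]
      _ ≤ M := hrow v
  have hMnn : 0 ≤ M := by
    obtain ⟨u⟩ := (inferInstance : Nonempty V)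
    exact (Finset.sum_nonneg (fun v _ => abs_nonneg (E u v))).trans (hrow u)
  -- the key identity
  have hid : A⁻¹ *ᵥ x - B⁻¹ *ᵥ x = A⁻¹ *ᵥ ((α • E) *ᵥ (B⁻¹ *ᵥ x)) := by
    have hBA : B - A = α • E := by
      rw [hA, hB, hE, add_sub_add_left_eq_sub, smul_sub]
    rw [Matrix.mulVec_mulVec, Matrix.mulVec_mulVec, ← hBA]
    have : A⁻¹ * (B - A) * B⁻¹ = A⁻¹ - B⁻¹ := by
      rw [Matrix.mul_sub, Matrix.sub_mul, Matrix.nonsing_inv_mul _ hdetA, Matrix.one_mul,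
        Matrix.mul_assoc, Matrix.mul_nonsing_inv _ hdetB, Matrix.mul_one]
    rw [this, Matrix.sub_mulVec]
  have hcontrA : ∀ z, l2norm (A⁻¹ *ᵥ z) ≤ l2norm z :=
    contraction hdetA (fun y => quad_lower G hG hαpos y)
  have hcontrB : ∀ z, l2norm (B⁻¹ *ᵥ z) ≤ l2norm z :=
    contraction hdetB (fun y => quad_lower Gp hGp hαpos y)
  set w := B⁻¹ *ᵥ x with hw
  have hmain : l2norm (A⁻¹ *ᵥ x - B⁻¹ *ᵥ x) ≤ α * M * l2norm x := by
    rw [hid, Matrix.smul_mulVec]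
    calc l2norm (A⁻¹ *ᵥ (α • (E *ᵥ w))) ≤ l2norm (α • (E *ᵥ w)) := hcontrA _
      _ = α * l2norm (E *ᵥ w) := l2norm_smul hαpos.le _
      _ ≤ α * (M * l2norm w) :=
          mul_le_mul_of_nonneg_left (schur hMnn hrow hcol w) hαpos.le
      _ ≤ α * (M * l2norm x) := by
          apply mul_le_mul_of_nonneg_left _ hαpos.le
          exact mul_le_mul_of_nonneg_left (hcontrB x) hMnn
      _ = α * M * l2norm x := by ring
  rw [div_le_iff₀ (l2norm_pos hx)]
  exact hmain

end Main

/-- **Structurally interpretable bound on the relative output distance of the low-pass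
filter `g(λ) = (1+αλ)⁻¹`**: for every nonzero signal `x`,
`‖(I+αL)⁻¹ x - (I+αL_p)⁻¹ x‖₂ / ‖x‖₂ ≤ α * max_u { Δ_u⁻/√(d_u δ_u) + Δ_u⁺/√(d_u' δ_u')
  + (α_u/(1-α_u)) (d_u - Δ_u⁻)/√(d_u δ_u) }`. -/
theorem lowpass_relative_output_distance_bound {V : Type*} [Fintype V] [DecidableEq V]
    [Nonempty V]
    (G Gp : SimpleGraph V) [DecidableRel G.Adj] [DecidableRel Gp.Adj]
    (hG : ∀ v, (G.neighborFinset v).Nonempty)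
    (hGp : ∀ v, (Gp.neighborFinset v).Nonempty)
    (α : ℝ) (hαpos : 0 < α)
    (hα : ∀ u, alphaU G Gp u ∈ Set.Ico (0 : ℝ) 1)
    (x : V → ℝ) (hx : x ≠ 0) :
    l2norm ((1 + α • normLap G)⁻¹ *ᵥ x - (1 + α • normLap Gp)⁻¹ *ᵥ x) / l2norm x ≤
      α * Finset.univ.sup' Finset.univ_nonempty (fun u =>
        ((Finset.univ.filter (fun v => G.Adj u v ∧ ¬ Gp.Adj u v)).card : ℝ) /
            Real.sqrt ((G.degree u : ℝ) *
              (G.neighborFinset u).inf' (hG u) (fun v => (G.degree v : ℝ))) +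
        ((Finset.univ.filter (fun v => Gp.Adj u v ∧ ¬ G.Adj u v)).card : ℝ) /
            Real.sqrt ((Gp.degree u : ℝ) *
              (Gp.neighborFinset u).inf' (hGp u) (fun v => (Gp.degree v : ℝ))) +
        (alphaU G Gp u / (1 - alphaU G Gp u)) *
          (((G.degree u : ℝ) -
              ((Finset.univ.filter (fun v => G.Adj u v ∧ ¬ Gp.Adj u v)).card : ℝ)) /
            Real.sqrt ((G.degree u : ℝ) *
              (G.neighborFinset u).inf' (hG u) (fun v => (G.degree v : ℝ))))) :=
  lowpass_relative_output_distance_bound' G Gp hG hGp α hαpos hα x hx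
end
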